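/- arXiv:2204.04566 — 5 statements merged into one kernel-verified Lean document; each statement's English description precedes it below -/
import Mathlib

section
/- Let $P, Q \in \mathbb{C}^n$ and let $Y = S_n\langle P, Q\rangle$ be the union of the $S_n$-orbits of $P$ and $Q$. Then $T(S_n\langle Q\rangle) \cdot (x_1 + \dots + x_n) \subseteq T(Y)$, i.e., the product of the ideal $T(S_n\langle Q\rangle)$ with the principal ideal generated by $x_1 + \dots + x_n$ is contained in $T(Y)$. -/
open MvPolynomial

noncomputable section

/-- The top degree component of a polynomial. -/
def topComponent {n : ℕ} (f : MvPolynomial (Fin n) ℂ) : MvPolynomial (Fin n) ℂ :=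
  homogeneousComponent f.totalDegree f

/-- The top degree (associated graded) ideal `T(Y)` of a set `Y ⊆ ℂⁿ`. -/
def topIdeal {n : ℕ} (Y : Set (Fin n → ℂ)) : Ideal (MvPolynomial (Fin n) ℂ) :=
  Ideal.span {g | ∃ f ∈ vanishingIdeal ℂ Y, f ≠ 0 ∧ topComponent f = g}

/-- The orbit of a point of `ℂⁿ` under the symmetric group permuting coordinates. -/
def permOrbit {n : ℕ} (P : Fin n → ℂ) : Set (Fin n → ℂ) :=
  {R | ∃ σ : Equiv.Perm (Fin n), R = P ∘ σ}

lemma topComponent_ne_zero {n : ℕ} {f : MvPolynomial (Fin n) ℂ} (hf : f ≠ 0) :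
    topComponent f ≠ 0 := by
  obtain ⟨d, hd, hdeg⟩ : ∃ d ∈ f.support, d.degree = f.totalDegree := by
    obtain ⟨d, hd, h⟩ := Finset.exists_mem_eq_sup f.support
      (support_nonempty.mpr hf) Finsupp.degree
    exact ⟨d, hd, h.symm⟩
  intro h
  have h2 := coeff_homogeneousComponent (σ := Fin n) (R := ℂ) f.totalDegree f d
  rw [show homogeneousComponent f.totalDegree f = topComponent f from rfl, h,
    coeff_zero] at h2
  rw [if_pos hdeg] at h2
  exact (mem_support_iff.mp hd) h2.symm

lemma sumX_homogeneous {n : ℕ} :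
    (∑ i : Fin n, (X i : MvPolynomial (Fin n) ℂ)).IsHomogeneous 1 :=
  IsHomogeneous.sum _ _ _ fun i _ => isHomogeneous_X _ _

lemma key_mem {n : ℕ} (hn : 0 < n) (P Q : Fin n → ℂ) {f : MvPolynomial (Fin n) ℂ}
    (hv : f ∈ vanishingIdeal ℂ (permOrbit Q)) (hf : f ≠ 0) :
    ∃ h ∈ vanishingIdeal ℂ (permOrbit P ∪ permOrbit Q), h ≠ 0 ∧
      topComponent h = topComponent f * ∑ i : Fin n, X i := by
  set S : MvPolynomial (Fin n) ℂ := ∑ i : Fin n, X i with hS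
  set c : ℂ := ∑ i, P i with hc
  set d : ℕ := f.totalDegree with hd
  have hnC : (n : ℂ) ≠ 0 := Nat.cast_ne_zero.mpr hn.ne'
  have hSsub : (S - C c) ≠ 0 := by
    intro hzero
    have := congrArg (eval (fun _ : Fin n => (c + 1) / n)) hzero
    simp [hS, eval_X, Finset.sum_const, div_mul_eq_mul_div, mul_comm,
      mul_div_assoc, mul_div_cancel_left₀ _ hnC] at this
    rw [mul_div_cancel₀ _ hnC] at this
    simp at this
  have hSne : S ≠ 0 := by
    intro hzero
    have := congrArg (eval (fun _ : Fin n => (1:ℂ))) hzero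
    simp [hS] at this
    exact hnC (by exact_mod_cast this)
  refine ⟨f * (S - C c), ?_, mul_ne_zero hf hSsub, ?_⟩
  · rw [mem_vanishingIdeal_iff]
    rintro y (⟨σ, rfl⟩ | hy)
    · have : eval (P ∘ σ) S = c := by
        simp only [hS, map_sum, eval_X, hc]
        exact Fintype.sum_equiv σ _ _ fun i => rfl
      simp [this]
    · have := (mem_vanishingIdeal_iff.mp hv) y hy
      simp at this
      simp [this]
  · -- top component computation
    have hcomp : homogeneousComponent (d + 1) (f * (S - C c)) = topComponent f * S := by
      have h1 : f * (S - C c) = f * S - C c * f := by ring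
      rw [h1, map_sub]
      have h2 : homogeneousComponent (d + 1) (C c * f) = 0 := by
        rw [homogeneousComponent_C_mul, homogeneousComponent_eq_zero _ f (lt_add_one d), mul_zero]
      rw [h2, sub_zero]
      conv_lhs => rw [← sum_homogeneousComponent f, Finset.sum_mul, map_sum]
      have h3 : ∀ i ∈ Finset.range (d + 1),
          homogeneousComponent (d + 1) (homogeneousComponent i f * S) =
            if d + 1 = i + 1 then homogeneousComponent i f * S else 0 := fun i _ =>
        homogeneousComponent_of_mem
          (mem_homogeneousSubmodule _ _ |>.mpr
            ((homogeneousComponent_isHomogeneous i f).mul sumX_homogeneous))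
      rw [Finset.sum_congr rfl h3]
      simp only [Nat.add_right_cancel_iff]
      rw [Finset.sum_ite_eq (Finset.range (d + 1)) d
        (fun i => homogeneousComponent i f * S), if_pos (Finset.self_mem_range_succ d)]
      rfl
    have hne : homogeneousComponent (d + 1) (f * (S - C c)) ≠ 0 := by
      rw [hcomp]
      exact mul_ne_zero (topComponent_ne_zero hf) hSne
    have hle : (f * (S - C c)).totalDegree ≤ d + 1 := by
      refine le_trans (totalDegree_mul _ _) ?_
      have : (S - C c).totalDegree ≤ 1 := by
        refine le_trans (totalDegree_sub _ _) ?_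
        simp only [max_le_iff]
        constructor
        · exact le_trans (totalDegree_finset_sum _ _) (by simp [totalDegree_X])
        · simp [totalDegree_C]
      omega
    have hge : d + 1 ≤ (f * (S - C c)).totalDegree := by
      by_contra hlt
      exact hne (homogeneousComponent_eq_zero _ _ (by omega))
    have : (f * (S - C c)).totalDegree = d + 1 := le_antisymm hle hge
    rw [topComponent, this, hcomp]

/-- Lemma 2.3: `T(S_n⟨Q⟩)·(x₁+⋯+xₙ) ⊆ T(S_n⟨P,Q⟩)`. -/
theorem top_ideal_product {n : ℕ} (P Q : Fin n → ℂ) :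
    topIdeal (permOrbit Q) * Ideal.span {∑ i : Fin n, (X i : MvPolynomial (Fin n) ℂ)} ≤
      topIdeal (permOrbit P ∪ permOrbit Q) := by
  rcases Nat.eq_zero_or_pos n with h0 | hn
  · subst h0
    have : (∑ i : Fin 0, (X i : MvPolynomial (Fin 0) ℂ)) = 0 := by simp
    rw [this, Set.singleton_zero, Ideal.span_zero, Ideal.mul_bot]
    exact bot_le
  rw [Ideal.mul_le]
  intro r hr s hs
  obtain ⟨a, rfl⟩ := Ideal.mem_span_singleton'.mp hs
  set S : MvPolynomial (Fin n) ℂ := ∑ i : Fin n, X i with hS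
  set K := topIdeal (permOrbit P ∪ permOrbit Q) with hK
  have main : r * S ∈ K := by
    induction hr using Submodule.span_induction with
    | mem x hx =>
      obtain ⟨f, hfv, hfne, rfl⟩ := hx
      obtain ⟨h, hh1, hh2, hh3⟩ := key_mem hn P Q hfv hfne
      exact Ideal.subset_span ⟨h, hh1, hh2, hh3⟩
    | zero => simp only [zero_mul]; exact K.zero_mem
    | add x y _ _ hx hy => rw [add_mul]; exact K.add_mem hx hy
    | smul a x _ hx =>
      rw [smul_eq_mul, mul_assoc]
      exact K.mul_mem_left a hx
  have : r * (a * S) = a * (r * S) := by ring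
  rw [this]
  exact K.mul_mem_left a main
end
end

section
/- Let $P, Q \in \mathbb{C}^n$, suppose $T(S_n\langle P\rangle) \subseteq T(S_n\langle Q\rangle)$ and $\Sigma(P) \neq \Sigma(Q)$, and let $Y = S_n\langle P, Q\rangle$. Then for every $d \geq 0$, the dimension over $\mathbb{C}$ of the degree-$d$ graded component of $\mathbb{C}[x_1,\dots,x_n]/T(Y)$ equals the dimension of the degree-$d$ component of $\mathbb{C}[x_1,\dots,x_n]/T(S_n\langle P\rangle)$ plus the dimension of the degree-$(d-1)$ component of $\mathbb{C}[x_1,\dots,x_n]/T(S_n\langle Q\rangle)$. -/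
open MvPolynomial

noncomputable section

/-- The degree-`d` graded piece of the quotient `ℂ[x₁,…,xₙ]/I`: the image of the space of
homogeneous polynomials of degree `d` under the quotient map. -/
def gradedPiece {n : ℕ} (I : Ideal (MvPolynomial (Fin n) ℂ)) (d : ℕ) :
    Submodule ℂ (MvPolynomial (Fin n) ℂ ⧸ I) :=
  (homogeneousSubmodule (Fin n) ℂ d).map (Ideal.Quotient.mkₐ ℂ I).toLinearMap

section Aux

open Module Submodule LinearMap

variable {n : ℕ}

/-- abbreviation for the polynomial ring -/
abbrev Pn (n : ℕ) := MvPolynomial (Fin n) ℂ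

/-- rank–nullity for the image of a submodule -/
lemma finrank_map_add_finrank_inf {M N : Type*} [AddCommGroup M] [Module ℂ M]
    [AddCommGroup N] [Module ℂ N] (p : Submodule ℂ M) [FiniteDimensional ℂ p]
    (f : M →ₗ[ℂ] N) :
    finrank ℂ (p.map f) + finrank ℂ (p ⊓ LinearMap.ker f : Submodule ℂ M)
      = finrank ℂ p := by
  have h := LinearMap.finrank_range_add_finrank_ker (f.domRestrict p)
  rw [LinearMap.range_domRestrict, LinearMap.ker_domRestrict] at h
  have h2 : comap p.subtype (LinearMap.ker f)
      = comap p.subtype (p ⊓ LinearMap.ker f) := by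
    rw [Submodule.comap_inf, Submodule.comap_subtype_self, top_inf_eq]
  rw [h2, (Submodule.comapSubtypeEquivOfLe
    (inf_le_left : p ⊓ LinearMap.ker f ≤ p)).finrank_eq] at h
  exact h

lemma finrank_map_of_inf_ker_eq_bot {M N : Type*} [AddCommGroup M] [Module ℂ M]
    [AddCommGroup N] [Module ℂ N] (p : Submodule ℂ M) [FiniteDimensional ℂ p]
    (f : M →ₗ[ℂ] N) (hf : p ⊓ LinearMap.ker f = ⊥) :
    finrank ℂ (p.map f) = finrank ℂ p := by
  have := finrank_map_add_finrank_inf p f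
  rw [hf] at this
  simpa using this

/-- the evaluation linear map on a subset of `ℂⁿ` -/
def evalL (Z : Set (Fin n → ℂ)) : Pn n →ₗ[ℂ] (Z → ℂ) where
  toFun f := fun z => eval z.1 f
  map_add' f g := by funext z; simp
  map_smul' c f := by funext z; simp [smul_eq_mul]

@[simp] lemma evalL_apply (Z : Set (Fin n → ℂ)) (f : Pn n) (z : Z) :
    evalL Z f z = eval z.1 f := rfl

lemma ker_evalL (Z : Set (Fin n → ℂ)) :
    LinearMap.ker (evalL (n := n) Z) = (vanishingIdeal ℂ Z).restrictScalars ℂ := by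
  ext f
  simp only [LinearMap.mem_ker, Submodule.restrictScalars_mem, mem_vanishingIdeal_iff]
  constructor
  · intro h x hx
    exact congrFun h ⟨x, hx⟩
  · intro h
    funext z
    exact h z.1 z.2

/-- polynomials of total degree at most `d` -/
abbrev Vd (n : ℕ) (d : ℕ) : Submodule ℂ (Pn n) := restrictTotalDegree (Fin n) ℂ d

/-- the vanishing ideal as a `ℂ`-submodule -/
abbrev IZ (Z : Set (Fin n → ℂ)) : Submodule ℂ (Pn n) :=
  (vanishingIdeal ℂ Z).restrictScalars ℂ

/-- the space of "leading terms in degree `d`" of the vanishing ideal -/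
def LTset (Z : Set (Fin n → ℂ)) (d : ℕ) : Submodule ℂ (Pn n) :=
  (IZ Z ⊓ Vd n d).map (homogeneousComponent d)

/-- the truncated Hilbert function of `Z` -/
def hdim (Z : Set (Fin n → ℂ)) (d : ℕ) : ℕ :=
  finrank ℂ ((Vd n d).map (evalL Z))

lemma homog_le_Vd (d : ℕ) : homogeneousSubmodule (Fin n) ℂ d ≤ Vd n d := by
  intro f hf
  rw [mem_restrictTotalDegree]
  exact ((mem_homogeneousSubmodule _ _).mp hf).totalDegree_le

instance homog_fd (d : ℕ) : FiniteDimensional ℂ (homogeneousSubmodule (Fin n) ℂ d) :=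
  Submodule.finiteDimensional_of_le (homog_le_Vd d)

lemma Vd_mono {a b : ℕ} (h : a ≤ b) : Vd n a ≤ Vd n b := by
  intro f hf
  rw [mem_restrictTotalDegree] at hf ⊢
  exact hf.trans h

lemma Vd_inf_ker_hc (d : ℕ) :
    Vd n (d + 1) ⊓ LinearMap.ker (homogeneousComponent (σ := Fin n) (R := ℂ) (d + 1))
      = Vd n d := by
  ext f
  simp only [Submodule.mem_inf, mem_restrictTotalDegree, LinearMap.mem_ker]
  constructor
  · rintro ⟨h1, h2⟩
    refine Finset.sup_le fun m hm => ?_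
    have hle : (m.sum fun _ e => e) ≤ d + 1 := le_totalDegree hm |>.trans h1
    rcases Nat.lt_or_ge (m.sum fun _ e => e) (d + 1) with h | h
    · omega
    · exfalso
      have hdeg : m.degree = d + 1 := by
        have he : m.degree = m.sum fun _ e => e := rfl
        omega
      have := coeff_homogeneousComponent (d + 1) f m
      rw [h2, hdeg] at this
      simp only [coeff_zero, if_pos rfl] at this
      exact (mem_support_iff.mp hm) this.symm
  · intro h
    exact ⟨h.trans (Nat.le_succ d),
      homogeneousComponent_eq_zero _ _ (Nat.lt_succ_of_le h)⟩

lemma map_Vd_hc (d : ℕ) :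
    (Vd n d).map (homogeneousComponent (σ := Fin n) (R := ℂ) d)
      = homogeneousSubmodule (Fin n) ℂ d := by
  apply le_antisymm
  · rintro _ ⟨f, _, rfl⟩
    exact homogeneousComponent_mem d f
  · intro f hf
    exact ⟨f, homog_le_Vd d hf, by
      rw [homogeneousComponent_of_mem hf, if_pos rfl]⟩


lemma mem_LTset_iff {Z : Set (Fin n → ℂ)} {d : ℕ} {x : Pn n} :
    x ∈ LTset Z d ↔ ∃ f, (f ∈ vanishingIdeal ℂ Z ∧ f.totalDegree ≤ d)
      ∧ homogeneousComponent d f = x := by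
  simp only [LTset, Submodule.mem_map, Submodule.mem_inf, Submodule.restrictScalars_mem,
    mem_restrictTotalDegree]

lemma LT_mul (Z : Set (Fin n → ℂ)) {a b : ℕ} {r : Pn n}
    (hr : r ∈ homogeneousSubmodule (Fin n) ℂ a) {x : Pn n} (hx : x ∈ LTset Z b) :
    r * x ∈ LTset Z (a + b) := by
  rw [mem_LTset_iff] at hx
  obtain ⟨f, ⟨hfI, hfV⟩, rfl⟩ := hx
  rcases le_or_gt b f.totalDegree with hb | hb
  · have hD : f.totalDegree = b := le_antisymm hfV hb
    rw [mem_LTset_iff]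
    refine ⟨r * f, ⟨Ideal.mul_mem_left _ r hfI, ?_⟩, ?_⟩
    · refine (totalDegree_mul r f).trans ?_
      exact add_le_add (((mem_homogeneousSubmodule _ _).mp hr).totalDegree_le) hfV
    · -- hc (a+b) (r*f) = r * hc b f
      conv_lhs => rw [← sum_homogeneousComponent f]
      rw [Finset.mul_sum, map_sum]
      have key : ∀ i ∈ Finset.range (f.totalDegree + 1),
          homogeneousComponent (a + b) (r * homogeneousComponent i f)
            = if i = b then r * homogeneousComponent b f else 0 := by
        intro i _
        have hmem : r * homogeneousComponent i f ∈ homogeneousSubmodule (Fin n) ℂ (a + i) := by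
          rw [mem_homogeneousSubmodule]
          exact ((mem_homogeneousSubmodule _ _).mp hr).mul (homogeneousComponent_isHomogeneous i f)
        rw [homogeneousComponent_of_mem hmem]
        by_cases hib : i = b
        · subst hib; simp
        · rw [if_neg (by omega), if_neg hib]
      rw [Finset.sum_congr rfl key, Finset.sum_ite_eq' _ b]
      rw [if_pos (by rw [Finset.mem_range]; omega)]
  · have : homogeneousComponent b f = 0 := homogeneousComponent_eq_zero _ _ hb
    rw [this, mul_zero]
    exact Submodule.zero_mem _

lemma hc_mem_LT {Z : Set (Fin n → ℂ)} {x : Pn n} (hx : x ∈ topIdeal Z) (d : ℕ) :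
    homogeneousComponent d x ∈ LTset Z d := by
  revert d
  refine Submodule.span_induction
    (p := fun y _ => ∀ e, homogeneousComponent e y ∈ LTset Z e) ?_ ?_ ?_ ?_ hx
  · rintro g ⟨f, hfI, hf0, rfl⟩ d
    have hmem : topComponent f ∈ homogeneousSubmodule (Fin n) ℂ f.totalDegree :=
      homogeneousComponent_mem _ f
    rw [homogeneousComponent_of_mem hmem]
    by_cases hd : d = f.totalDegree
    · rw [if_pos hd]
      subst hd
      exact mem_LTset_iff.mpr ⟨f, ⟨hfI, le_rfl⟩, rfl⟩
    · rw [if_neg hd]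
      exact Submodule.zero_mem _
  · intro d
    rw [map_zero]; exact Submodule.zero_mem _
  · intro x y _ _ hx hy d
    rw [map_add]; exact Submodule.add_mem _ (hx d) (hy d)
  · intro r x _ hx d
    have hrx : (r • x : Pn n) = r * x := rfl
    have hexp : r * x = ∑ a ∈ Finset.range (r.totalDegree + 1),
        ∑ b ∈ Finset.range (x.totalDegree + 1),
          homogeneousComponent a r * homogeneousComponent b x := by
      conv_lhs => rw [← sum_homogeneousComponent r, ← sum_homogeneousComponent x]
      rw [Finset.sum_mul_sum]
    rw [hrx, hexp, map_sum]
    refine Submodule.sum_mem _ fun a _ => ?_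
    rw [map_sum]
    refine Submodule.sum_mem _ fun b _ => ?_
    have hmem : homogeneousComponent a r * homogeneousComponent b x
        ∈ homogeneousSubmodule (Fin n) ℂ (a + b) := by
      rw [mem_homogeneousSubmodule]
      exact (homogeneousComponent_isHomogeneous a r).mul (homogeneousComponent_isHomogeneous b x)
    rw [homogeneousComponent_of_mem hmem]
    by_cases hd : d = a + b
    · rw [if_pos hd]
      subst hd
      exact LT_mul Z (homogeneousComponent_mem a r) (hx b)
    · rw [if_neg hd]
      exact Submodule.zero_mem _

lemma homog_inf_topIdeal (Z : Set (Fin n → ℂ)) (d : ℕ) :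
    homogeneousSubmodule (Fin n) ℂ d ⊓ (topIdeal Z).restrictScalars ℂ = LTset Z d := by
  apply le_antisymm
  · intro x hx
    obtain ⟨hx1, hx2⟩ := Submodule.mem_inf.mp hx
    have := hc_mem_LT ((Submodule.restrictScalars_mem ℂ _ _).mp hx2) d
    rwa [homogeneousComponent_of_mem hx1, if_pos rfl] at this
  · intro x hx
    obtain ⟨f, ⟨hfI, hfV⟩, rfl⟩ := mem_LTset_iff.mp hx
    refine Submodule.mem_inf.mpr ⟨homogeneousComponent_mem d f, ?_⟩
    rw [Submodule.restrictScalars_mem]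
    by_cases h0 : homogeneousComponent d f = 0
    · rw [h0]; exact Ideal.zero_mem _
    · have hf0 : f ≠ 0 := by rintro rfl; simp at h0
      have hdle : d ≤ f.totalDegree := by
        by_contra h
        exact h0 (homogeneousComponent_eq_zero _ _ (by omega))
      have hDd : f.totalDegree = d := le_antisymm hfV hdle
      apply Ideal.subset_span
      exact ⟨f, hfI, hf0, by rw [topComponent, hDd]⟩


lemma ker_mkQ (I : Ideal (Pn n)) :
    LinearMap.ker (Ideal.Quotient.mkₐ ℂ I).toLinearMap = I.restrictScalars ℂ := by
  ext x
  simp only [LinearMap.mem_ker, AlgHom.toLinearMap_apply, Ideal.Quotient.mkₐ_eq_mk,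
    Submodule.restrictScalars_mem]
  exact Ideal.Quotient.eq_zero_iff_mem

lemma rank_graded (Z : Set (Fin n → ℂ)) (d : ℕ) :
    finrank ℂ (gradedPiece (topIdeal Z) d) + finrank ℂ (LTset Z d)
      = finrank ℂ (homogeneousSubmodule (Fin n) ℂ d) := by
  have h := finrank_map_add_finrank_inf (homogeneousSubmodule (Fin n) ℂ d)
    (Ideal.Quotient.mkₐ ℂ (topIdeal Z)).toLinearMap
  rw [ker_mkQ, homog_inf_topIdeal] at h
  exact h

lemma rank_V_step (d : ℕ) :
    finrank ℂ (Vd n (d + 1)) = finrank ℂ (Vd n d)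
      + finrank ℂ (homogeneousSubmodule (Fin n) ℂ (d + 1)) := by
  have h := finrank_map_add_finrank_inf (Vd n (d + 1))
    (homogeneousComponent (σ := Fin n) (R := ℂ) (d + 1))
  rw [map_Vd_hc, Vd_inf_ker_hc] at h
  omega

lemma rank_I_step (Z : Set (Fin n → ℂ)) (d : ℕ) :
    finrank ℂ (LTset Z (d + 1)) + finrank ℂ ((IZ Z ⊓ Vd n d : Submodule ℂ (Pn n)))
      = finrank ℂ ((IZ Z ⊓ Vd n (d + 1) : Submodule ℂ (Pn n))) := by
  haveI : FiniteDimensional ℂ ((IZ Z ⊓ Vd n (d+1) : Submodule ℂ (Pn n))) :=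
    Submodule.finiteDimensional_of_le inf_le_right
  have h := finrank_map_add_finrank_inf (IZ Z ⊓ Vd n (d + 1))
    (homogeneousComponent (σ := Fin n) (R := ℂ) (d + 1))
  rw [inf_assoc, Vd_inf_ker_hc] at h
  exact h

lemma rank_h (Z : Set (Fin n → ℂ)) (d : ℕ) :
    hdim Z d + finrank ℂ ((IZ Z ⊓ Vd n d : Submodule ℂ (Pn n))) = finrank ℂ (Vd n d) := by
  have h := finrank_map_add_finrank_inf (Vd n d) (evalL Z)
  rw [ker_evalL, inf_comm] at h
  exact h

lemma Vd_zero_eq : Vd n 0 = homogeneousSubmodule (Fin n) ℂ 0 := by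
  apply le_antisymm
  · intro f hf
    rw [mem_restrictTotalDegree, Nat.le_zero] at hf
    rw [mem_homogeneousSubmodule]
    exact isHomogeneous_of_totalDegree_zero (Fin n) hf
  · exact homog_le_Vd 0

lemma LTset_zero (Z : Set (Fin n → ℂ)) : LTset Z 0 = (IZ Z ⊓ Vd n 0 : Submodule ℂ (Pn n)) := by
  have hid : ∀ f ∈ Vd n 0, homogeneousComponent 0 f = f := by
    intro f hf
    have : f ∈ homogeneousSubmodule (Fin n) ℂ 0 := Vd_zero_eq ▸ hf
    rw [homogeneousComponent_of_mem this, if_pos rfl]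
  apply le_antisymm
  · rintro x hx
    obtain ⟨f, ⟨hfI, hfV⟩, rfl⟩ := mem_LTset_iff.mp hx
    have hfV' : f ∈ Vd n 0 := (mem_restrictTotalDegree _ _ _).mpr hfV
    rw [hid f hfV']
    exact Submodule.mem_inf.mpr ⟨hfI, hfV'⟩
  · intro x hx
    obtain ⟨hx1, hx2⟩ := Submodule.mem_inf.mp hx
    exact mem_LTset_iff.mpr ⟨x, ⟨hx1, (mem_restrictTotalDegree _ _ _).mp hx2⟩, hid x hx2⟩

/-- degree-0 graded piece has dimension `hdim Z 0` -/
lemma graded_zero (Z : Set (Fin n → ℂ)) :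
    finrank ℂ (gradedPiece (topIdeal Z) 0) = hdim Z 0 := by
  have h1 := rank_graded Z 0
  have h2 := rank_h Z 0
  rw [LTset_zero] at h1
  have h3 : finrank ℂ (homogeneousSubmodule (Fin n) ℂ 0) = finrank ℂ (Vd n 0) := by
    rw [Vd_zero_eq]
  omega

/-- the degree-`d+1` graded piece has dimension `hdim Z (d+1) - hdim Z d` -/
lemma graded_succ (Z : Set (Fin n → ℂ)) (d : ℕ) :
    finrank ℂ (gradedPiece (topIdeal Z) (d + 1)) + hdim Z d = hdim Z (d + 1) := by
  have h1 := rank_graded Z (d + 1)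
  have h2 := rank_V_step (n := n) d
  have h3 := rank_I_step Z d
  have h4 := rank_h Z (d + 1)
  have h5 := rank_h Z d
  omega


lemma eq_C_of_totalDegree_zero {f : Pn n} (hf : f.totalDegree = 0) :
    f = C (coeff 0 f) := by
  ext m
  by_cases hm : m = 0
  · subst hm; simp
  · rw [coeff_C, if_neg (Ne.symm hm)]
    by_contra hc
    have hm' : m ∈ f.support := mem_support_iff.mpr hc
    have := (totalDegree_eq_zero_iff (Fin n) f).mp hf m hm'
    exact hm (Finsupp.ext this)

lemma totalDegree_pos_of_vanishing {Z : Set (Fin n → ℂ)} (hZ : Z.Nonempty) {f : Pn n}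
    (hf : f ∈ vanishingIdeal ℂ Z) (hf0 : f ≠ 0) : 1 ≤ f.totalDegree := by
  by_contra h
  have h0 : f.totalDegree = 0 := by omega
  obtain ⟨z, hz⟩ := hZ
  have hev := mem_vanishingIdeal_iff.mp hf z hz
  have hC : f = C (coeff 0 f) := eq_C_of_totalDegree_zero h0
  rw [hC, aeval_C, Algebra.algebraMap_self, RingHom.id_apply] at hev
  exact hf0 (by rw [hC, hev, map_zero])

/-- the constant-functions map -/
def constL (Z : Set (Fin n → ℂ)) : ℂ →ₗ[ℂ] (Z → ℂ) where
  toFun c := fun _ => c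
  map_add' _ _ := rfl
  map_smul' _ _ := rfl

lemma hdim_zero {Z : Set (Fin n → ℂ)} (hZ : Z.Nonempty) : hdim Z 0 = 1 := by
  have hrange : (Vd n 0).map (evalL Z) = LinearMap.range (constL Z) := by
    apply le_antisymm
    · rintro _ ⟨f, hf, rfl⟩
      have h0 : f.totalDegree = 0 := Nat.le_zero.mp ((mem_restrictTotalDegree _ _ _).mp hf)
      refine ⟨coeff 0 f, ?_⟩
      funext z
      show coeff 0 f = eval z.1 f
      conv_rhs => rw [eq_C_of_totalDegree_zero h0]
      rw [eval_C]
    · rintro _ ⟨c, rfl⟩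
      refine ⟨C c, ?_, ?_⟩
      · exact (mem_restrictTotalDegree _ _ _).mpr (le_of_eq (totalDegree_C c))
      · funext z; simp [constL]
  have hker : LinearMap.ker (constL (n := n) Z) = ⊥ := by
    rw [LinearMap.ker_eq_bot]
    intro a b hab
    obtain ⟨z, hz⟩ := hZ
    exact congrFun hab ⟨z, hz⟩
  have h := LinearMap.finrank_range_add_finrank_ker (constL (n := n) Z)
  rw [hker, finrank_bot, Module.finrank_self] at h
  rw [hdim, hrange]
  omega

lemma sum_mem_orbit {P : Fin n → ℂ} {y : Fin n → ℂ} (hy : y ∈ permOrbit P) :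
    ∑ i, y i = ∑ i, P i := by
  obtain ⟨σ, rfl⟩ := hy
  exact Equiv.sum_comp σ P

lemma orbit_nonempty (P : Fin n → ℂ) : (permOrbit P).Nonempty :=
  ⟨P, Equiv.refl _, rfl⟩


/-- restriction of functions on a union to the pair of function spaces -/
def resL (O1 O2 : Set (Fin n → ℂ)) :
    ((O1 ∪ O2 : Set (Fin n → ℂ)) → ℂ) →ₗ[ℂ] ((O1 → ℂ) × (O2 → ℂ)) where
  toFun g := (fun p => g ⟨p.1, Or.inl p.2⟩, fun q => g ⟨q.1, Or.inr q.2⟩)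
  map_add' _ _ := rfl
  map_smul' _ _ := rfl

lemma resL_ker (O1 O2 : Set (Fin n → ℂ)) : LinearMap.ker (resL (n := n) O1 O2) = ⊥ := by
  rw [LinearMap.ker_eq_bot]
  intro g h hg
  have h1 := congrArg Prod.fst hg
  have h2 := congrArg Prod.snd hg
  funext y
  rcases y.2 with hy | hy
  · have h3 := congrFun h1 ⟨y.1, hy⟩
    have e : (⟨y.1, Or.inl hy⟩ : (O1 ∪ O2 : Set (Fin n → ℂ))) = y := Subtype.ext rfl
    rw [← e]
    exact h3
  · have h3 := congrFun h2 ⟨y.1, hy⟩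
    have e : (⟨y.1, Or.inr hy⟩ : (O1 ∪ O2 : Set (Fin n → ℂ))) = y := Subtype.ext rfl
    rw [← e]
    exact h3

lemma hdim_union_eq (O1 O2 : Set (Fin n → ℂ)) (d : ℕ) :
    hdim (O1 ∪ O2) d = finrank ℂ ((Vd n d).map ((evalL O1).prod (evalL O2))) := by
  have hcomp : (resL O1 O2) ∘ₗ evalL (O1 ∪ O2) = (evalL O1).prod (evalL O2) := rfl
  rw [← hcomp, Submodule.map_comp]
  rw [hdim]
  exact (finrank_map_of_inf_ker_eq_bot _ _ (by rw [resL_ker, inf_bot_eq])).symm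

lemma hdim_union_succ {P Q : Fin n → ℂ}
    (hPQ : topIdeal (permOrbit P) ≤ topIdeal (permOrbit Q))
    (hsum : ∑ i, P i ≠ ∑ i, Q i) (d : ℕ) :
    hdim (permOrbit P ∪ permOrbit Q) (d + 1)
      = hdim (permOrbit P) (d + 1) + hdim (permOrbit Q) d := by
  set O1 := permOrbit P with hO1
  set O2 := permOrbit Q with hO2
  set Ψ : Pn n →ₗ[ℂ] ((O1 → ℂ) × (O2 → ℂ)) := (evalL O1).prod (evalL O2) with hΨ
  set M : Submodule ℂ ((O1 → ℂ) × (O2 → ℂ)) := (Vd n (d + 1)).map Ψ with hM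
  set fstL := LinearMap.fst ℂ (O1 → ℂ) (O2 → ℂ)
  set sndL := LinearMap.snd ℂ (O1 → ℂ) (O2 → ℂ)
  set K : Submodule ℂ ((O1 → ℂ) × (O2 → ℂ)) := M ⊓ LinearMap.ker fstL with hK
  have hMfst : M.map fstL = (Vd n (d + 1)).map (evalL O1) := by
    rw [hM, ← Submodule.map_comp, hΨ, LinearMap.fst_prod]
  have h1 : finrank ℂ (M.map fstL) + finrank ℂ K = finrank ℂ M :=
    finrank_map_add_finrank_inf M fstL
  haveI : FiniteDimensional ℂ K := Submodule.finiteDimensional_of_le inf_le_left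
  have h2 : finrank ℂ (K.map sndL) = finrank ℂ K := by
    apply finrank_map_of_inf_ker_eq_bot
    rw [eq_bot_iff]
    intro x hx
    obtain ⟨hxK, hx2⟩ := Submodule.mem_inf.mp hx
    obtain ⟨hxM, hx1⟩ := Submodule.mem_inf.mp hxK
    rw [LinearMap.mem_ker] at hx1 hx2
    rw [Submodule.mem_bot]
    exact Prod.ext hx1 hx2
  -- the key identification
  have h3 : K.map sndL = (Vd n d).map (evalL O2) := by
    apply le_antisymm
    · intro w hw
      obtain ⟨x, hxK, rfl⟩ := Submodule.mem_map.mp hw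
      obtain ⟨hxM, hxker⟩ := Submodule.mem_inf.mp hxK
      obtain ⟨f, hfV, rfl⟩ := Submodule.mem_map.mp hxM
      rw [LinearMap.mem_ker] at hxker
      have hev1 : evalL O1 f = 0 := hxker
      have hfvan : f ∈ vanishingIdeal ℂ O1 := by
        have := hev1
        rw [← LinearMap.mem_ker, ker_evalL] at this
        exact this
      show evalL O2 f ∈ (Vd n d).map (evalL O2)
      by_cases hf0 : f = 0
      · subst hf0
        rw [map_zero]
        exact Submodule.zero_mem _
      · have hD1 : 1 ≤ f.totalDegree :=
          totalDegree_pos_of_vanishing (orbit_nonempty P) hfvan hf0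
        obtain ⟨D, hDeq⟩ : ∃ D, f.totalDegree = D + 1 := ⟨f.totalDegree - 1, by omega⟩
        have htop : topComponent f ∈ topIdeal O2 :=
          hPQ (Ideal.subset_span ⟨f, hfvan, hf0, rfl⟩)
        have h4 : topComponent f ∈ LTset O2 f.totalDegree := by
          have h5 := hc_mem_LT htop f.totalDegree
          have hmem : topComponent f ∈ homogeneousSubmodule (Fin n) ℂ f.totalDegree :=
            homogeneousComponent_mem _ f
          rwa [homogeneousComponent_of_mem hmem, if_pos rfl] at h5
        obtain ⟨f', ⟨hf'I, hf'V⟩, hf'top⟩ := mem_LTset_iff.mp h4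
        have hgdeg : (f - f').totalDegree ≤ f.totalDegree :=
          (totalDegree_sub f f').trans (max_le le_rfl hf'V)
        have hghc : homogeneousComponent f.totalDegree (f - f') = 0 := by
          rw [map_sub, hf'top, topComponent, sub_self]
        have hgVd : f - f' ∈ Vd n D := by
          rw [← Vd_inf_ker_hc D]
          refine Submodule.mem_inf.mpr ⟨?_, ?_⟩
          · rw [mem_restrictTotalDegree]
            omega
          · rw [LinearMap.mem_ker, ← hDeq]
            exact hghc
        have hDd : D ≤ d := by
          have := (mem_restrictTotalDegree _ _ _).mp hfV
          omega
        have hev2 : evalL O2 f = evalL O2 (f - f') := by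
          rw [map_sub]
          have : evalL O2 f' = 0 := by
            rw [← LinearMap.mem_ker, ker_evalL]
            exact hf'I
          rw [this, sub_zero]
        rw [hev2]
        exact Submodule.mem_map.mpr ⟨f - f', Vd_mono hDd hgVd, rfl⟩
    · intro w hw
      obtain ⟨g, hgV, rfl⟩ := Submodule.mem_map.mp hw
      set c : ℂ := (∑ i, Q i) - (∑ i, P i) with hc
      have hc0 : c ≠ 0 := sub_ne_zero.mpr (Ne.symm hsum)
      set L : Pn n := (∑ i, X i) - C (∑ i, P i) with hL
      have hLdeg : L.totalDegree ≤ 1 := by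
        refine (totalDegree_sub _ _).trans (max_le ?_ ?_)
        · exact (totalDegree_finset_sum _ _).trans
            (Finset.sup_le fun i _ => le_of_eq (totalDegree_X i))
        · rw [totalDegree_C]; omega
      set f : Pn n := c⁻¹ • (L * g) with hf
      have hfC : f = C c⁻¹ * (L * g) := smul_eq_C_mul _ _
      have hfV : f ∈ Vd n (d + 1) := by
        rw [mem_restrictTotalDegree]
        refine (totalDegree_smul_le _ _).trans ?_
        refine (totalDegree_mul _ _).trans ?_
        have := (mem_restrictTotalDegree _ _ _).mp hgV
        omega
      have hevL : ∀ z : Fin n → ℂ, eval z L = (∑ i, z i) - (∑ i, P i) := by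
        intro z
        rw [hL, map_sub, eval_C, map_sum]
        simp [eval_X]
      have hevP : evalL O1 f = 0 := by
        funext z
        show eval z.1 f = 0
        rw [hfC, map_mul, map_mul, hevL z.1, sum_mem_orbit z.2, sub_self, zero_mul, mul_zero]
      have hevQ : evalL O2 f = evalL O2 g := by
        funext z
        show eval z.1 f = eval z.1 g
        rw [hfC, map_mul, map_mul, hevL z.1, sum_mem_orbit z.2, eval_C, ← hc,
          ← mul_assoc, inv_mul_cancel₀ hc0, one_mul]
      refine Submodule.mem_map.mpr ⟨Ψ f, Submodule.mem_inf.mpr ⟨?_, ?_⟩, ?_⟩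
      · exact Submodule.mem_map.mpr ⟨f, hfV, rfl⟩
      · rw [LinearMap.mem_ker]
        show evalL O1 f = 0
        exact hevP
      · show evalL O2 f = evalL O2 g
        exact hevQ
  -- assemble
  rw [hdim_union_eq]
  rw [show hdim O1 (d + 1) = finrank ℂ ((Vd n (d + 1)).map (evalL O1)) from rfl,
    show hdim O2 d = finrank ℂ ((Vd n d).map (evalL O2)) from rfl]
  rw [← hΨ, ← hM, ← hMfst, ← h3, h2]
  omega

end Aux

/-- under the hypotheses of the main theorem, the dimension of the degree-`d`
piece of `ℂ[x]/T(S_n⟨P,Q⟩)` is the dimension of the degree-`d` piece of `ℂ[x]/T(S_n⟨P⟩)` plus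
the dimension of the degree-`(d-1)` piece of `ℂ[x]/T(S_n⟨Q⟩)` (which is zero when `d = 0`). -/
theorem graded_dimensions {n : ℕ} (P Q : Fin n → ℂ)
    (hPQ : topIdeal (permOrbit P) ≤ topIdeal (permOrbit Q))
    (hsum : ∑ i, P i ≠ ∑ i, Q i) :
    (Module.finrank ℂ (gradedPiece (topIdeal (permOrbit P ∪ permOrbit Q)) 0) =
        Module.finrank ℂ (gradedPiece (topIdeal (permOrbit P)) 0)) ∧
      ∀ d : ℕ,
        Module.finrank ℂ (gradedPiece (topIdeal (permOrbit P ∪ permOrbit Q)) (d + 1)) =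
          Module.finrank ℂ (gradedPiece (topIdeal (permOrbit P)) (d + 1)) +
            Module.finrank ℂ (gradedPiece (topIdeal (permOrbit Q)) d) := by
  have hYne : (permOrbit P ∪ permOrbit Q).Nonempty := by
    obtain ⟨p, hp⟩ := orbit_nonempty P
    exact ⟨p, Or.inl hp⟩
  have hY0 : hdim (permOrbit P ∪ permOrbit Q) 0 = 1 := hdim_zero hYne
  have hP0 : hdim (permOrbit P) 0 = 1 := hdim_zero (orbit_nonempty P)
  have hQ0 : hdim (permOrbit Q) 0 = 1 := hdim_zero (orbit_nonempty Q)
  constructor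
  · rw [graded_zero (permOrbit P ∪ permOrbit Q), graded_zero (permOrbit P)]
    omega
  · intro d
    have hA := graded_succ (permOrbit P ∪ permOrbit Q) d
    have hB := graded_succ (permOrbit P) d
    have hU1 := hdim_union_succ hPQ hsum d
    cases d with
    | zero =>
      have hC := graded_zero (permOrbit Q)
      omega
    | succ e =>
      have hC := graded_succ (permOrbit Q) e
      have hU2 := hdim_union_succ hPQ hsum e
      omega
end
end

section
/- For any finite set $Y \subseteq \mathbb{C}^n$, the quotient ring $\widehat{A}(Y) = \mathbb{C}[x_1,\dots,x_n]/T(Y)$ is a finite-dimensional $\mathbb{C}$-vector space of dimension exactly $|Y|$, the number of points of $Y$. -/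
open MvPolynomial

noncomputable section

namespace DimQuotAux

variable {n : ℕ}

lemma deg_sum_eq (α : Fin n →₀ ℕ) : (α.sum fun _ e => e) = α.degree := rfl

lemma degree_add (a b : Fin n →₀ ℕ) : (a + b).degree = a.degree + b.degree := by
  rw [Finsupp.degree_eq_weight_one]
  exact map_add _ a b

lemma degree_single_one (i : Fin n) : (Finsupp.single i 1).degree = 1 := by
  rw [Finsupp.degree_single]

lemma le_totalDegree' {f : MvPolynomial (Fin n) ℂ} {α : Fin n →₀ ℕ} (h : α ∈ f.support) :
    α.degree ≤ f.totalDegree := by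
  rw [← deg_sum_eq]; exact le_totalDegree h

lemma topComponent_ne_zero {f : MvPolynomial (Fin n) ℂ} (hf : f ≠ 0) :
    homogeneousComponent f.totalDegree f ≠ 0 := by
  have hne : f.support.Nonempty := by
    rw [Finset.nonempty_iff_ne_empty, Ne, MvPolynomial.support_eq_empty]; exact hf
  obtain ⟨α, hα, hsup⟩ := f.support.exists_mem_eq_sup hne fun s => s.sum fun _ e => e
  intro h0
  have : coeff α (homogeneousComponent f.totalDegree f) = coeff α f := by
    rw [coeff_homogeneousComponent, if_pos]
    rw [← deg_sum_eq, ← hsup]; rfl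
  rw [h0] at this
  exact (mem_support_iff.mp hα) (by simpa using this.symm)

lemma sum_homogeneousComponent_ge {f : MvPolynomial (Fin n) ℂ} {N : ℕ} (h : f.totalDegree ≤ N) :
    ∑ j ∈ Finset.range (N + 1), homogeneousComponent j f = f := by
  conv_rhs => rw [← sum_homogeneousComponent f]
  symm
  apply Finset.sum_subset (Finset.range_subset_range.mpr (Nat.succ_le_succ h))
  intro j hj hj'
  simp only [Finset.mem_range] at hj hj'
  exact homogeneousComponent_eq_zero j f (by omega)

lemma homogeneousComponent_mul_homog {p q : MvPolynomial (Fin n) ℂ} {e : ℕ}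
    (hp : p ∈ homogeneousSubmodule (Fin n) ℂ e) (d : ℕ) :
    homogeneousComponent d (p * q) =
      if e ≤ d then p * homogeneousComponent (d - e) q else 0 := by
  conv_lhs => rw [← sum_homogeneousComponent q, Finset.mul_sum, map_sum]
  have hterm : ∀ c, homogeneousComponent d (p * homogeneousComponent c q)
      = if d = e + c then p * homogeneousComponent c q else 0 := fun c =>
    homogeneousComponent_of_mem (by
      rw [mem_homogeneousSubmodule] at hp ⊢
      exact hp.mul (homogeneousComponent_isHomogeneous c q))
  simp only [hterm]
  by_cases hed : e ≤ d
  · by_cases hq : d - e ≤ q.totalDegree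
    · rw [Finset.sum_eq_single_of_mem (d - e) (Finset.mem_range.mpr (by omega))
        (fun c _ hne => if_neg (by omega)), if_pos (by omega), if_pos hed]
    · rw [Finset.sum_eq_zero (fun c hc => if_neg (by
        simp only [Finset.mem_range] at hc; omega)), if_pos hed,
        homogeneousComponent_eq_zero _ q (by omega), mul_zero]
  · rw [Finset.sum_eq_zero (fun c hc => if_neg (by omega)), if_neg hed]

lemma totalDegree_homogeneousComponent_le (e : ℕ) (p : MvPolynomial (Fin n) ℂ) :
    (homogeneousComponent e p).totalDegree ≤ e := by
  by_cases h : homogeneousComponent e p = 0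
  · simp [h]
  · exact le_of_eq ((homogeneousComponent_isHomogeneous e p).totalDegree h)

lemma exists_vanishing_monomial (s : Finset (Fin n → ℂ)) (α : Fin n →₀ ℕ)
    (hcard : s.card ≤ α.degree) :
    ∃ f r : MvPolynomial (Fin n) ℂ, f = monomial α 1 + r ∧
      (r = 0 ∨ r.totalDegree < α.degree) ∧ ∀ y ∈ s, eval y f = 0 := by
  classical
  induction s using Finset.induction generalizing α with
  | empty => exact ⟨monomial α 1, 0, by simp, Or.inl rfl, by simp⟩
  | insert _ _ hy ih =>
    rename_i y s
    rw [Finset.card_insert_of_notMem hy] at hcard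
    have hα1 : 1 ≤ α.degree := by omega
    have hαne : α ≠ 0 := by
      intro h; rw [h, map_zero] at hα1; omega
    obtain ⟨i, hi⟩ := Finsupp.support_nonempty_iff.mpr hαne
    have hαi : α i ≠ 0 := Finsupp.mem_support_iff.mp hi
    set α' : Fin n →₀ ℕ := α - Finsupp.single i 1 with hα'
    have hadd : Finsupp.single i 1 + α' = α := by
      ext j
      rw [Finsupp.add_apply, hα', Finsupp.tsub_apply]
      by_cases hj : j = i
      · subst hj; rw [Finsupp.single_eq_same]; omega
      · rw [Finsupp.single_eq_of_ne hj]; omega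
    have hdeg : α'.degree + 1 = α.degree := by
      rw [← hadd, degree_add, degree_single_one]; omega
    obtain ⟨f', r', hf', hr', hvan⟩ := ih α' (by omega)
    refine ⟨(X i - C (y i)) * f', X i * r' - C (y i) * f', ?_, ?_, ?_⟩
    · have hXm : X i * monomial α' (1 : ℂ) = monomial α 1 := by
        rw [X, monomial_mul, one_mul, hadd]
      rw [hf']
      ring_nf
      rw [← hXm]
      ring
    · right
      have h1 : (X (R := ℂ) i * r').totalDegree < α.degree := by
        rcases hr' with h | h
        · simp only [h, mul_zero, totalDegree_zero]; omega
        · calc (X (R := ℂ) i * r').totalDegree ≤ (X (R := ℂ) i).totalDegree + r'.totalDegree :=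
            totalDegree_mul _ _
          _ < 1 + α'.degree := by rw [totalDegree_X]; omega
          _ ≤ α.degree := by omega
      have hf'deg : f'.totalDegree ≤ α'.degree := by
        rw [hf']
        refine le_trans (totalDegree_add _ _) ?_
        simp only [sup_le_iff]
        constructor
        · rw [totalDegree_monomial _ (one_ne_zero (α := ℂ)), deg_sum_eq]
        · rcases hr' with h | h
          · simp [h]
          · omega
      have h2 : (C (y i) * f').totalDegree < α.degree := by
        calc (C (y i) * f').totalDegree ≤ (C (y i)).totalDegree + f'.totalDegree :=
          totalDegree_mul _ _
        _ ≤ 0 + α'.degree := by rw [totalDegree_C]; omega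
        _ < α.degree := by omega
      rw [sub_eq_add_neg]
      refine lt_of_le_of_lt (totalDegree_add _ _) ?_
      rw [totalDegree_neg]
      omega
    · intro z hz
      rw [map_mul]
      rcases Finset.mem_insert.mp hz with h | h
      · subst h; simp
      · rw [hvan z h, mul_zero]


end DimQuotAux

namespace DimQuotAux
variable {n : ℕ}

lemma coeff_eq_zero_of_totalDegree_lt {r : MvPolynomial (Fin n) ℂ} {α : Fin n →₀ ℕ}
    (h : r.totalDegree < α.degree) : coeff α r = 0 := by
  by_contra hc
  exact absurd (le_totalDegree' (mem_support_iff.mpr hc)) (by omega)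

lemma monomial_mem_topIdeal (Y : Set (Fin n → ℂ)) (hY : Y.Finite) (α : Fin n →₀ ℕ)
    (hα : Nat.card Y ≤ α.degree) : monomial α (1 : ℂ) ∈ topIdeal Y := by
  classical
  have hcard : hY.toFinset.card = Nat.card Y := by
    rw [Nat.card_coe_set_eq, Set.ncard_eq_toFinset_card _ hY]
  obtain ⟨f, r, hf, hr, hvan⟩ := exists_vanishing_monomial hY.toFinset α (by omega)
  have hcoeffr : coeff α r = 0 := by
    rcases hr with h | h
    · simp [h]
    · exact coeff_eq_zero_of_totalDegree_lt h
  have coeffα : coeff α f = 1 := by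
    rw [hf, coeff_add, coeff_monomial, if_pos rfl, hcoeffr, add_zero]
  have hf0 : f ≠ 0 := fun h => by simp [h] at coeffα
  have hdegf : f.totalDegree = α.degree := by
    apply le_antisymm
    · rw [hf]
      refine le_trans (totalDegree_add _ _) ?_
      simp only [sup_le_iff]
      refine ⟨le_of_eq ?_, ?_⟩
      · rw [totalDegree_monomial _ (one_ne_zero (α := ℂ)), deg_sum_eq]
      · rcases hr with h | h
        · simp [h]
        · omega
    · exact le_totalDegree' (mem_support_iff.mpr (by rw [coeffα]; exact one_ne_zero))
  have htop : topComponent f = monomial α 1 := by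
    rw [topComponent, hdegf, hf, map_add]
    have h1 : homogeneousComponent α.degree (monomial α (1:ℂ)) = monomial α 1 := by
      rw [homogeneousComponent_of_mem ((mem_homogeneousSubmodule _ _).mpr
        (isHomogeneous_monomial _ rfl)), if_pos rfl]
    have h2 : homogeneousComponent α.degree r = 0 := by
      rcases hr with h | h
      · simp [h]
      · exact homogeneousComponent_eq_zero _ _ h
    rw [h1, h2, add_zero]
  exact Ideal.subset_span ⟨f, fun x hx => hvan x (hY.mem_toFinset.mpr hx), hf0, htop⟩

lemma mem_topIdeal_of_high_degree (Y : Set (Fin n → ℂ)) (hY : Y.Finite)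
    {f : MvPolynomial (Fin n) ℂ} {d : ℕ} (hd : Nat.card Y ≤ d)
    (hf : f ∈ homogeneousSubmodule (Fin n) ℂ d) : f ∈ topIdeal Y := by
  nth_rewrite 1 [f.as_sum]
  apply Submodule.sum_mem
  intro β hβ
  have hdeg : β.degree = d := by
    rw [Finsupp.degree_eq_weight_one]
    exact (mem_homogeneousSubmodule _ _).mp hf (mem_support_iff.mp hβ)
  have hmon : monomial β (coeff β f) = C (coeff β f) * monomial β (1:ℂ) := by
    rw [C_mul_monomial, mul_one]
  rw [hmon]
  exact Ideal.mul_mem_left _ _ (monomial_mem_topIdeal Y hY β (by omega))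

lemma finiteDimensional_quot_topIdeal (Y : Set (Fin n → ℂ)) (hY : Y.Finite) :
    FiniteDimensional ℂ (MvPolynomial (Fin n) ℂ ⧸ topIdeal Y) := by
  classical
  set k := Nat.card Y with hk
  have hfin : ({β : Fin n →₀ ℕ | β.degree ≤ k}).Finite := Finsupp.finite_of_degree_le k
  set S : Set (MvPolynomial (Fin n) ℂ) := (fun β => monomial β (1:ℂ)) '' {β | β.degree ≤ k}
    with hS
  have hSfin : S.Finite := hfin.image _
  have hspan : Submodule.span ℂ (⇑(Ideal.Quotient.mkₐ ℂ (topIdeal Y)) '' S) = ⊤ := by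
    rw [Submodule.eq_top_iff']
    intro x
    obtain ⟨f, rfl⟩ := Ideal.Quotient.mkₐ_surjective ℂ (topIdeal Y) x
    nth_rewrite 1 [f.as_sum]
    rw [map_sum]
    apply Submodule.sum_mem
    intro β _
    have hmon : (Ideal.Quotient.mkₐ ℂ (topIdeal Y)) (monomial β (coeff β f))
        = (coeff β f) • (Ideal.Quotient.mkₐ ℂ (topIdeal Y)) (monomial β 1) := by
      rw [← map_smul, smul_monomial, smul_eq_mul, mul_one]
    rw [hmon]
    by_cases hdeg : β.degree ≤ k
    · exact Submodule.smul_mem _ _ (Submodule.subset_span ⟨monomial β 1, ⟨β, hdeg, rfl⟩, rfl⟩)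
    · rw [show (Ideal.Quotient.mkₐ ℂ (topIdeal Y)) (monomial β (1:ℂ)) = 0 by
        rw [Ideal.Quotient.mkₐ_eq_mk, Ideal.Quotient.eq_zero_iff_mem]
        exact monomial_mem_topIdeal Y hY β (by omega), smul_zero]
      exact Submodule.zero_mem _
  exact ⟨Submodule.fg_def.mpr ⟨_, hSfin.image _, hspan⟩⟩

end DimQuotAux
namespace DimQuotAux
variable {n : ℕ}

lemma exists_approx (Y : Set (Fin n → ℂ)) {t : MvPolynomial (Fin n) ℂ} (ht : t ∈ topIdeal Y) :
    ∀ d : ℕ, ∃ u ∈ vanishingIdeal ℂ Y, u.totalDegree ≤ d ∧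
      homogeneousComponent d t = homogeneousComponent d u := by
  induction ht using Submodule.span_induction with
  | mem x hxmem =>
    obtain ⟨f, hfI, hf0, rfl⟩ := hxmem
    intro d
    by_cases hd : d = f.totalDegree
    · subst hd
      exact ⟨f, hfI, le_refl _, by
        rw [topComponent, homogeneousComponent_of_mem (homogeneousComponent_mem _ _), if_pos rfl]⟩
    · refine ⟨0, Submodule.zero_mem _, by simp, ?_⟩
      rw [topComponent, homogeneousComponent_of_mem (homogeneousComponent_mem _ _), if_neg hd,
        map_zero]
  | zero => intro d; exact ⟨0, Submodule.zero_mem _, by simp, by simp⟩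
  | add x y hxs hys hx hy =>
    intro d
    obtain ⟨ux, hux, hdx, hcx⟩ := hx d
    obtain ⟨uy, huy, hdy, hcy⟩ := hy d
    refine ⟨ux + uy, Submodule.add_mem _ hux huy, ?_, by rw [map_add, map_add, hcx, hcy]⟩
    refine le_trans (totalDegree_add _ _) ?_
    simp only [sup_le_iff]
    exact ⟨hdx, hdy⟩
  | smul a x hxs ih =>
    intro d
    choose u hmem hdeg hcomp using ih
    refine ⟨∑ e ∈ Finset.range (a.totalDegree + 1),
        if e ≤ d then homogeneousComponent e a * u (d - e) else 0, ?_, ?_, ?_⟩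
    · apply Submodule.sum_mem
      intro e _
      split
      · exact Ideal.mul_mem_left _ _ (hmem (d - e))
      · exact Submodule.zero_mem _
    · refine le_trans (totalDegree_finset_sum _ _) ?_
      apply Finset.sup_le
      intro e _
      split
      · refine le_trans (totalDegree_mul _ _) ?_
        have h1 := totalDegree_homogeneousComponent_le e a
        have h2 := hdeg (d - e)
        omega
      · simp
    · rw [smul_eq_mul]
      conv_lhs => rw [← sum_homogeneousComponent a, Finset.sum_mul, map_sum]
      rw [map_sum]
      apply Finset.sum_congr rfl
      intro e _
      by_cases he : e ≤ d
      · rw [homogeneousComponent_mul_homog (homogeneousComponent_mem e a) d, if_pos he,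
          if_pos he, homogeneousComponent_mul_homog (homogeneousComponent_mem e a) d,
          if_pos he, hcomp (d - e)]
      · rw [homogeneousComponent_mul_homog (homogeneousComponent_mem e a) d, if_neg he,
          if_neg he, map_zero]

lemma span_quotient_vanishing (Y : Set (Fin n → ℂ)) (G : Set (MvPolynomial (Fin n) ℂ))
    (hG : ∀ g ∈ G, ∃ e, g ∈ homogeneousSubmodule (Fin n) ℂ e)
    (hspan : Submodule.span ℂ (⇑(Ideal.Quotient.mkₐ ℂ (topIdeal Y)) '' G) = ⊤) :
    Submodule.span ℂ (⇑(Ideal.Quotient.mkₐ ℂ (vanishingIdeal ℂ Y)) '' G) = ⊤ := by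
  set qT := (Ideal.Quotient.mkₐ ℂ (topIdeal Y)).toLinearMap with hqT
  set qI := (Ideal.Quotient.mkₐ ℂ (vanishingIdeal ℂ Y)).toLinearMap with hqI
  have hqTc : ⇑qT = ⇑(Ideal.Quotient.mk (topIdeal Y)) := by
    funext x; rw [hqT, AlgHom.toLinearMap_apply, Ideal.Quotient.mkₐ_eq_mk]
  have hqIc : ⇑qI = ⇑(Ideal.Quotient.mk (vanishingIdeal ℂ Y)) := by
    funext x; rw [hqI, AlgHom.toLinearMap_apply, Ideal.Quotient.mkₐ_eq_mk]
  set M := Submodule.span ℂ (⇑(Ideal.Quotient.mkₐ ℂ (vanishingIdeal ℂ Y)) '' G) with hM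
  have hMM : M = Submodule.span ℂ (⇑qI '' G) := by
    rw [hM, hqIc, Ideal.Quotient.mkₐ_eq_mk]
  have key : ∀ c : ℕ, ∀ h : MvPolynomial (Fin n) ℂ, h ∈ homogeneousSubmodule (Fin n) ℂ c →
      qI h ∈ M := by
    intro c
    induction c using Nat.strong_induction_on with
    | _ c IH =>
    intro h hh
    have h1 : qT h ∈ Submodule.map qT (Submodule.span ℂ G) := by
      rw [Submodule.map_span]
      have heq : ⇑qT '' G = ⇑(Ideal.Quotient.mkₐ ℂ (topIdeal Y)) '' G := by
        rw [hqTc, Ideal.Quotient.mkₐ_eq_mk]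
      rw [heq, hspan]
      exact Submodule.mem_top
    obtain ⟨w, hw, hqw⟩ := h1
    have htT : h - w ∈ topIdeal Y := by
      rw [← Ideal.Quotient.eq_zero_iff_mem, map_sub, sub_eq_zero]
      rw [hqTc] at hqw
      exact hqw.symm
    obtain ⟨u, huI, hud, hcomp⟩ := exists_approx Y htT c
    have hhc : homogeneousComponent c h = h := by
      rw [homogeneousComponent_of_mem hh, if_pos rfl]
    have hsplit : h = homogeneousComponent c w + homogeneousComponent c u := by
      conv_lhs => rw [← hhc]
      calc homogeneousComponent c h
          = homogeneousComponent c (w + (h - w)) := by rw [add_sub_cancel]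
        _ = homogeneousComponent c w + homogeneousComponent c (h - w) := map_add _ _ _
        _ = homogeneousComponent c w + homogeneousComponent c u := by rw [hcomp]
    have hw1 : homogeneousComponent c w ∈ Submodule.span ℂ G := by
      have h2 : homogeneousComponent c w ∈
          Submodule.map (homogeneousComponent c (σ := Fin n) (R := ℂ)) (Submodule.span ℂ G) :=
        Submodule.mem_map_of_mem hw
      rw [Submodule.map_span] at h2
      refine Submodule.span_le.mpr ?_ h2
      rintro _ ⟨g, hg, rfl⟩
      obtain ⟨e, hge⟩ := hG g hg
      rw [homogeneousComponent_of_mem hge]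
      split
      · exact Submodule.subset_span hg
      · exact Submodule.zero_mem _
    have hw2 : qI (homogeneousComponent c w) ∈ M := by
      have h3 := Submodule.mem_map_of_mem (f := qI) hw1
      rw [Submodule.map_span] at h3
      rw [hMM]
      exact h3
    have hu0 : qI u = 0 := by
      rw [hqIc, Ideal.Quotient.eq_zero_iff_mem]
      exact huI
    have husum : u = homogeneousComponent c u + ∑ j ∈ Finset.range c, homogeneousComponent j u := by
      conv_lhs => rw [← sum_homogeneousComponent_ge hud, Finset.sum_range_succ]
      ring
    have hu2 : qI (homogeneousComponent c u) ∈ M := by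
      have h3 := congrArg (⇑qI) husum
      rw [hu0, map_add, map_sum] at h3
      rw [eq_neg_of_add_eq_zero_left h3.symm]
      refine Submodule.neg_mem _ (Submodule.sum_mem _ ?_)
      intro j hj
      exact IH j (Finset.mem_range.mp hj) _ (homogeneousComponent_mem j u)
    rw [show qI h = qI (homogeneousComponent c w) + qI (homogeneousComponent c u) by
      rw [← map_add, ← hsplit]]
    exact Submodule.add_mem _ hw2 hu2
  rw [Submodule.eq_top_iff']
  intro x
  obtain ⟨f, rfl⟩ := Ideal.Quotient.mkₐ_surjective ℂ (vanishingIdeal ℂ Y) x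
  have hfq : (Ideal.Quotient.mkₐ ℂ (vanishingIdeal ℂ Y)) f = qI f := by
    rw [hqI]; exact (AlgHom.toLinearMap_apply _ _).symm
  rw [hfq, show f = ∑ i ∈ Finset.range (f.totalDegree + 1), homogeneousComponent i f from
    (sum_homogeneousComponent f).symm, map_sum]
  apply Submodule.sum_mem
  intro e _
  exact key e _ (homogeneousComponent_mem e f)

end DimQuotAux
namespace DimQuotAux
variable {n : ℕ}

lemma linearIndependent_vanishing (Y : Set (Fin n → ℂ)) {ι : Type} {g : ι → MvPolynomial (Fin n) ℂ}
    (e : ι → ℕ) (he : ∀ i, g i ∈ homogeneousSubmodule (Fin n) ℂ (e i))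
    (hind : LinearIndependent ℂ (fun i => Ideal.Quotient.mkₐ ℂ (topIdeal Y) (g i))) :
    LinearIndependent ℂ (fun i => Ideal.Quotient.mkₐ ℂ (vanishingIdeal ℂ Y) (g i)) := by
  rw [linearIndependent_iff'] at hind ⊢
  intro s c hsum i hi
  set f : MvPolynomial (Fin n) ℂ := ∑ j ∈ s, c j • g j with hf
  have hfI : f ∈ vanishingIdeal ℂ Y := by
    rw [← Ideal.Quotient.eq_zero_iff_mem, ← Ideal.Quotient.mkₐ_eq_mk ℂ]
    calc (Ideal.Quotient.mkₐ ℂ (vanishingIdeal ℂ Y)) f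
        = ∑ j ∈ s, c j • (Ideal.Quotient.mkₐ ℂ (vanishingIdeal ℂ Y)) (g j) := by
          rw [hf, map_sum]
          exact Finset.sum_congr rfl fun j _ => map_smul _ _ _
      _ = 0 := hsum
  by_cases hf0 : f = 0
  · refine hind s c ?_ i hi
    calc ∑ j ∈ s, c j • (Ideal.Quotient.mkₐ ℂ (topIdeal Y)) (g j)
        = (Ideal.Quotient.mkₐ ℂ (topIdeal Y)) f := by
          rw [hf, map_sum]
          exact (Finset.sum_congr rfl fun j _ => (map_smul _ _ _).symm)
      _ = 0 := by rw [hf0, map_zero]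
  · exfalso
    have htop : homogeneousComponent f.totalDegree f ∈ topIdeal Y :=
      Ideal.subset_span ⟨f, hfI, hf0, rfl⟩
    have hD : homogeneousComponent f.totalDegree f
        = ∑ j ∈ s, (if f.totalDegree = e j then c j else 0) • g j := by
      rw [hf, map_sum]
      apply Finset.sum_congr rfl
      intro j _
      rw [map_smul, homogeneousComponent_of_mem (he j)]
      by_cases hj : f.totalDegree = e j
      · rw [if_pos hj, if_pos hj]
      · rw [if_neg hj, if_neg hj, smul_zero, zero_smul]
    have hzero : ∀ j ∈ s, (if f.totalDegree = e j then c j else 0) = 0 := by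
      refine hind s _ ?_
      calc ∑ j ∈ s, (if f.totalDegree = e j then c j else 0) •
            (Ideal.Quotient.mkₐ ℂ (topIdeal Y)) (g j)
          = (Ideal.Quotient.mkₐ ℂ (topIdeal Y))
              (∑ j ∈ s, (if f.totalDegree = e j then c j else 0) • g j) := by
            rw [map_sum]
            exact (Finset.sum_congr rfl fun j _ => (map_smul _ _ _).symm)
        _ = (Ideal.Quotient.mkₐ ℂ (topIdeal Y)) (homogeneousComponent f.totalDegree f) := by
            rw [← hD]
        _ = 0 := by
            rw [Ideal.Quotient.mkₐ_eq_mk, Ideal.Quotient.eq_zero_iff_mem]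
            exact htop
    have hcz : homogeneousComponent f.totalDegree f = 0 := by
      rw [hD]
      exact Finset.sum_eq_zero fun j hj => by rw [hzero j hj, zero_smul]
    exact topComponent_ne_zero hf0 hcz

lemma quotient_vanishing_equiv (Y : Set (Fin n → ℂ)) (hY : Y.Finite) :
    haveI := hY.fintype
    Nonempty ((MvPolynomial (Fin n) ℂ ⧸ vanishingIdeal ℂ Y) ≃ₐ[ℂ] (↥Y → ℂ)) := by
  classical
  haveI := hY.fintype
  set Φ : MvPolynomial (Fin n) ℂ →ₐ[ℂ] (↥Y → ℂ) :=
    Pi.algHom ℂ _ (fun y => MvPolynomial.aeval (y : Fin n → ℂ)) with hΦ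
  have hΦapp : ∀ (f : MvPolynomial (Fin n) ℂ) (y : ↥Y), Φ f y = eval (y : Fin n → ℂ) f := by
    intro f y
    show (MvPolynomial.aeval (y : Fin n → ℂ)) f = _
    rw [aeval_def, Algebra.algebraMap_self]
    rfl
  have hker : RingHom.ker Φ = vanishingIdeal ℂ Y := by
    ext f
    rw [RingHom.mem_ker, mem_vanishingIdeal_iff]
    constructor
    · intro h x hx
      have := congrFun h ⟨x, hx⟩
      rwa [hΦapp, Pi.zero_apply] at this
    · intro h
      funext y
      rw [hΦapp, Pi.zero_apply]
      exact h y y.2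
  have interp : ∀ y : ↥Y, ∃ p, ∀ z : ↥Y,
      eval (z : Fin n → ℂ) p = if z = y then 1 else 0 := by
    intro y
    have hex : ∀ z ∈ hY.toFinset.erase ↑y, ∃ i, (y : Fin n → ℂ) i ≠ z i := by
      intro z hz
      have hne : z ≠ ↑y := Finset.ne_of_mem_erase hz
      by_contra hc
      push_neg at hc
      exact hne (funext hc).symm
    choose idx hidx using hex
    refine ⟨∏ z ∈ (hY.toFinset.erase ↑y).attach,
      (C ((((y : Fin n → ℂ)) (idx z z.2) - (z : Fin n → ℂ) (idx z z.2))⁻¹) *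
        (X (idx z z.2) - C ((z : Fin n → ℂ) (idx z z.2)))), ?_⟩
    intro z
    rw [map_prod]
    by_cases hzy : z = y
    · subst hzy
      rw [if_pos rfl]
      apply Finset.prod_eq_one
      intro w _
      rw [map_mul, eval_C, map_sub, eval_X, eval_C]
      exact inv_mul_cancel₀ (sub_ne_zero.mpr (hidx w w.2))
    · rw [if_neg hzy]
      have hzmem : (z : Fin n → ℂ) ∈ hY.toFinset.erase ↑y := by
        rw [Finset.mem_erase]
        exact ⟨fun h => hzy (Subtype.ext h), hY.mem_toFinset.mpr z.2⟩
      apply Finset.prod_eq_zero (Finset.mem_attach _ ⟨(z : Fin n → ℂ), hzmem⟩)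
      rw [map_mul, map_sub, eval_X, eval_C, eval_C, sub_self, mul_zero]
  have hsurj : Function.Surjective Φ := by
    intro v
    choose p hp using interp
    refine ⟨∑ y : ↥Y, C (v y) * p y, ?_⟩
    funext z
    rw [hΦapp, map_sum]
    have : ∀ y : ↥Y, eval (z : Fin n → ℂ) (C (v y) * p y) = if z = y then v y else 0 := by
      intro y
      rw [map_mul, eval_C, hp y z]
      by_cases h : z = y
      · rw [if_pos h, if_pos h, mul_one]
      · rw [if_neg h, if_neg h, mul_zero]
    rw [Finset.sum_congr rfl fun y _ => this y]
    simp
  exact ⟨(Ideal.quotientEquivAlgOfEq ℂ hker.symm).trans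
    (Ideal.quotientKerAlgEquivOfSurjective hsurj)⟩

end DimQuotAux

/-- `Â(Y) = ℂ[x]/T(Y)` has dimension `|Y|` over `ℂ`. -/
theorem dim_quotient_top_ideal {n : ℕ} (Y : Set (Fin n → ℂ)) (hY : Y.Finite) :
    FiniteDimensional ℂ (MvPolynomial (Fin n) ℂ ⧸ topIdeal Y) ∧
      Module.finrank ℂ (MvPolynomial (Fin n) ℂ ⧸ topIdeal Y) = Nat.card Y := by
  classical
  haveI := hY.fintype
  obtain ⟨eqv⟩ := DimQuotAux.quotient_vanishing_equiv Y hY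
  haveI hIfd : FiniteDimensional ℂ (MvPolynomial (Fin n) ℂ ⧸ vanishingIdeal ℂ Y) :=
    Module.Finite.equiv eqv.symm.toLinearEquiv
  have hrI : Module.finrank ℂ (MvPolynomial (Fin n) ℂ ⧸ vanishingIdeal ℂ Y) = Nat.card Y := by
    rw [eqv.toLinearEquiv.finrank_eq, Module.finrank_pi, Nat.card_eq_fintype_card]
  haveI hTfd : FiniteDimensional ℂ (MvPolynomial (Fin n) ℂ ⧸ topIdeal Y) :=
    DimQuotAux.finiteDimensional_quot_topIdeal Y hY
  refine ⟨hTfd, ?_⟩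
  set S₀ : Set (MvPolynomial (Fin n) ℂ) := {f | ∃ e, f ∈ homogeneousSubmodule (Fin n) ℂ e}
    with hS₀
  have hS₀span : Submodule.span ℂ (⇑(Ideal.Quotient.mkₐ ℂ (topIdeal Y)) '' S₀) = ⊤ := by
    rw [Submodule.eq_top_iff']
    intro x
    obtain ⟨f, rfl⟩ := Ideal.Quotient.mkₐ_surjective ℂ (topIdeal Y) x
    rw [show f = ∑ i ∈ Finset.range (f.totalDegree + 1), homogeneousComponent i f from
      (sum_homogeneousComponent f).symm, map_sum]
    apply Submodule.sum_mem
    intro e _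
    exact Submodule.subset_span ⟨homogeneousComponent e f, ⟨e, homogeneousComponent_mem e f⟩, rfl⟩
  obtain ⟨b, hbsub, hbspan, hbind⟩ := exists_linearIndependent ℂ
    (⇑(Ideal.Quotient.mkₐ ℂ (topIdeal Y)) '' S₀)
  rw [hS₀span] at hbspan
  haveI : Finite ↥b := hbind.finite
  haveI : Fintype ↥b := Fintype.ofFinite _
  have hlift : ∀ x : ↥b, ∃ gp : MvPolynomial (Fin n) ℂ,
      (∃ e, gp ∈ homogeneousSubmodule (Fin n) ℂ e) ∧
        (Ideal.Quotient.mkₐ ℂ (topIdeal Y)) gp = ↑x := fun x => by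
    obtain ⟨gp, hgp, hgx⟩ := hbsub x.2
    exact ⟨gp, hgp, hgx⟩
  choose g hg hgx using hlift
  choose e he using hg
  have hcoe : (fun x : ↥b => (Ideal.Quotient.mkₐ ℂ (topIdeal Y)) (g x))
      = fun x : ↥b => (x : MvPolynomial (Fin n) ℂ ⧸ topIdeal Y) := funext hgx
  have hbT : Module.finrank ℂ (MvPolynomial (Fin n) ℂ ⧸ topIdeal Y) = Fintype.card ↥b := by
    refine Module.finrank_eq_card_basis (Module.Basis.mk hbind ?_)
    rw [Subtype.range_coe, hbspan]
  have hindI : LinearIndependent ℂ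
      (fun x : ↥b => Ideal.Quotient.mkₐ ℂ (vanishingIdeal ℂ Y) (g x)) := by
    apply DimQuotAux.linearIndependent_vanishing Y e he
    exact hcoe ▸ hbind
  have h1 : Fintype.card ↥b ≤ Module.finrank ℂ (MvPolynomial (Fin n) ℂ ⧸ vanishingIdeal ℂ Y) :=
    hindI.fintype_card_le_finrank
  have himg : ⇑(Ideal.Quotient.mkₐ ℂ (topIdeal Y)) '' Set.range g = b := by
    rw [← Set.range_comp]
    have hc2 : (⇑(Ideal.Quotient.mkₐ ℂ (topIdeal Y)) ∘ g)
        = fun x : ↥b => (x : MvPolynomial (Fin n) ℂ ⧸ topIdeal Y) := funext hgx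
    rw [hc2, Subtype.range_coe]
  have hspanI : Submodule.span ℂ
      (⇑(Ideal.Quotient.mkₐ ℂ (vanishingIdeal ℂ Y)) '' Set.range g) = ⊤ := by
    apply DimQuotAux.span_quotient_vanishing Y
    · rintro _ ⟨x, rfl⟩
      exact ⟨e x, he x⟩
    · rw [himg, hbspan]
  have h2 : Module.finrank ℂ (MvPolynomial (Fin n) ℂ ⧸ vanishingIdeal ℂ Y) ≤ Fintype.card ↥b := by
    apply finrank_le_of_span_eq_top
      (v := fun x : ↥b => Ideal.Quotient.mkₐ ℂ (vanishingIdeal ℂ Y) (g x))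
    rw [show (fun x : ↥b => Ideal.Quotient.mkₐ ℂ (vanishingIdeal ℂ Y) (g x))
      = ⇑(Ideal.Quotient.mkₐ ℂ (vanishingIdeal ℂ Y)) ∘ g from rfl, Set.range_comp]
    exact hspanI
  omega
end
end

section
/- Let $P, Q \in \mathbb{C}^n$ and let $Y = S_n\langle P, Q\rangle$. The $\mathbb{C}[x_1,\dots,x_n]$-module map from $\mathbb{C}[x_1,\dots,x_n]/T(S_n\langle Q\rangle)$ to $\mathbb{C}[x_1,\dots,x_n]/T(Y)$ induced by multiplication by $x_1+\dots+x_n$ is well defined (i.e., multiplication by $x_1+\dots+x_n$ maps $T(S_n\langle Q\rangle)$ into $T(Y)$), and if moreover $T(S_n\langle P\rangle) \subseteq T(S_n\langle Q\rangle)$ and $\Sigma(P) \neq \Sigma(Q)$, then this map is injective. -/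
open MvPolynomial

noncomputable section

namespace StmtAux

variable {n : ℕ}

/-- Homogeneous component of a product with a homogeneous polynomial. -/
lemma comp_mul_homog {p : MvPolynomial (Fin n) ℂ} {i : ℕ} (hp : p.IsHomogeneous i)
    (f : MvPolynomial (Fin n) ℂ) (d : ℕ) :
    homogeneousComponent d (p * f) =
      if i ≤ d then p * homogeneousComponent (d - i) f else 0 := by
  have hterm : ∀ j, homogeneousComponent d (p * homogeneousComponent j f) =
      if d = i + j then p * homogeneousComponent j f else 0 := fun j =>
    homogeneousComponent_of_mem
      ((mem_homogeneousSubmodule _ _).2 (hp.mul (homogeneousComponent_isHomogeneous j f)))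
  calc homogeneousComponent d (p * f)
      = ∑ j ∈ Finset.range (f.totalDegree + 1),
          homogeneousComponent d (p * homogeneousComponent j f) := by
        conv_lhs => rw [← sum_homogeneousComponent f]
        rw [Finset.mul_sum, map_sum]
    _ = ∑ j ∈ Finset.range (f.totalDegree + 1),
          if d = i + j then p * homogeneousComponent j f else 0 :=
        Finset.sum_congr rfl fun j _ => hterm j
    _ = if i ≤ d then p * homogeneousComponent (d - i) f else 0 := by
        by_cases hid : i ≤ d
        · rw [if_pos hid, Finset.sum_eq_single (d - i)]
          · rw [if_pos (by omega)]
          · intro j _ hne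
            rw [if_neg (by omega)]
          · intro hnotin
            have h2 : ¬ (d - i < f.totalDegree + 1) :=
              fun hmem => hnotin (Finset.mem_range.mpr hmem)
            have h3 : f.totalDegree < d - i := by omega
            rw [if_pos (by omega), homogeneousComponent_eq_zero _ _ h3, mul_zero]
        · rw [if_neg hid]
          apply Finset.sum_eq_zero
          intro j _
          rw [if_neg (by omega)]

/-- The "is a degree-`d` leading form of the ideal `I` (or zero)" predicate. -/
def Pred (I : Ideal (MvPolynomial (Fin n) ℂ)) (d : ℕ) (h : MvPolynomial (Fin n) ℂ) : Prop :=
  ∃ g ∈ I, g.totalDegree ≤ d ∧ homogeneousComponent d g = h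

lemma Pred.zero (I : Ideal (MvPolynomial (Fin n) ℂ)) (d : ℕ) : Pred I d 0 :=
  ⟨0, I.zero_mem, by simp, by simp⟩

lemma Pred.add {I : Ideal (MvPolynomial (Fin n) ℂ)} {d : ℕ} {h₁ h₂ : MvPolynomial (Fin n) ℂ}
    (p₁ : Pred I d h₁) (p₂ : Pred I d h₂) : Pred I d (h₁ + h₂) := by
  obtain ⟨g₁, hg₁, hd₁, hc₁⟩ := p₁
  obtain ⟨g₂, hg₂, hd₂, hc₂⟩ := p₂
  exact ⟨g₁ + g₂, I.add_mem hg₁ hg₂,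
    le_trans (totalDegree_add g₁ g₂) (max_le hd₁ hd₂), by rw [map_add, hc₁, hc₂]⟩

lemma Pred.mul {I : Ideal (MvPolynomial (Fin n) ℂ)} {p : MvPolynomial (Fin n) ℂ} {i d : ℕ}
    {h : MvPolynomial (Fin n) ℂ} (hp : p.IsHomogeneous i) (hh : Pred I d h) :
    Pred I (i + d) (p * h) := by
  obtain ⟨g, hg, hd, hc⟩ := hh
  refine ⟨p * g, I.mul_mem_left p hg,
    le_trans (totalDegree_mul p g) (add_le_add hp.totalDegree_le hd), ?_⟩
  rw [comp_mul_homog hp, if_pos (Nat.le_add_right i d)]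
  have hdi : i + d - i = d := by omega
  rw [hdi, hc]

/-- Every element of `topIdeal Y` has, in each degree `d`, a homogeneous component that is the
degree-`d` component of an element of the vanishing ideal of total degree at most `d`. -/
lemma topIdeal_struct {Y : Set (Fin n → ℂ)} {f : MvPolynomial (Fin n) ℂ}
    (hf : f ∈ topIdeal Y) :
    ∀ d : ℕ, Pred (vanishingIdeal ℂ Y) d (homogeneousComponent d f) := by
  refine Submodule.span_induction
    (p := fun x _ => ∀ d, Pred (vanishingIdeal ℂ Y) d (homogeneousComponent d x))
    ?_ ?_ ?_ ?_ hf
  · rintro x ⟨g, hgI, hg0, rfl⟩ d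
    rw [show homogeneousComponent d (topComponent g)
        = if d = g.totalDegree then topComponent g else 0 from
      homogeneousComponent_of_mem (homogeneousComponent_mem _ _)]
    split_ifs with hd
    · exact ⟨g, hgI, hd.ge, by rw [hd]; rfl⟩
    · exact Pred.zero _ _
  · intro d; rw [map_zero]; exact Pred.zero _ _
  · intro x y _ _ px py d
    rw [map_add]; exact (px d).add (py d)
  · intro a x _ px d
    rw [smul_eq_mul]
    have hxsum : a * x
        = ∑ i ∈ Finset.range (a.totalDegree + 1), homogeneousComponent i a * x := by
      rw [← Finset.sum_mul, sum_homogeneousComponent]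
    rw [hxsum, map_sum]
    refine Finset.sum_induction _ (Pred (vanishingIdeal ℂ Y) d)
      (fun _ _ => Pred.add) (Pred.zero _ _) ?_
    intro i _
    rw [comp_mul_homog (homogeneousComponent_isHomogeneous i a)]
    split_ifs with hle
    · have := (Pred.mul (homogeneousComponent_isHomogeneous i a) (px (d - i)))
      rwa [Nat.add_sub_cancel' hle] at this
    · exact Pred.zero _ _

lemma topComponent_ne_zero {f : MvPolynomial (Fin n) ℂ} (hf : f ≠ 0) : topComponent f ≠ 0 := by
  obtain ⟨d, hd, hsup⟩ := Finset.exists_mem_eq_sup f.support (support_nonempty.mpr hf)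
    (fun s : Fin n →₀ ℕ => s.sum fun _ e => e)
  have hdeg : d.degree = f.totalDegree := by
    rw [totalDegree, hsup]; rfl
  intro h0
  have hc : coeff d (topComponent f) = coeff d f := by
    rw [topComponent, coeff_homogeneousComponent, if_pos hdeg]
  rw [h0, coeff_zero] at hc
  exact (mem_support_iff.mp hd) hc.symm

/-- If `g` vanishes on `Y` and has total degree at most `d`, its degree-`d` component lies in
the top ideal of `Y`. -/
lemma comp_mem_topIdeal {Y : Set (Fin n → ℂ)} {g : MvPolynomial (Fin n) ℂ}
    (hg : g ∈ vanishingIdeal ℂ Y) {d : ℕ} (hdeg : g.totalDegree ≤ d) :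
    homogeneousComponent d g ∈ topIdeal Y := by
  rcases eq_or_lt_of_le hdeg with heq | hlt
  · by_cases hg0 : g = 0
    · subst hg0; rw [map_zero]; exact zero_mem _
    · exact Ideal.subset_span ⟨g, hg, hg0, by rw [topComponent, heq]⟩
  · rw [homogeneousComponent_eq_zero _ _ hlt]; exact zero_mem _

lemma totalDegree_le_of_comp {g : MvPolynomial (Fin n) ℂ} {d : ℕ}
    (hdeg : g.totalDegree ≤ d + 1) (h0 : homogeneousComponent (d + 1) g = 0) :
    g.totalDegree ≤ d := by
  by_cases hg0 : g = 0
  · subst hg0; simp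
  rcases eq_or_lt_of_le hdeg with heq | hlt
  · exact absurd (by rw [topComponent, heq, h0]) (topComponent_ne_zero hg0)
  · omega

lemma e_homog : (∑ i : Fin n, X i : MvPolynomial (Fin n) ℂ).IsHomogeneous 1 :=
  IsHomogeneous.sum _ _ _ fun i _ => isHomogeneous_X ℂ i

lemma esub_mem (P : Fin n → ℂ) :
    ((∑ i : Fin n, X i) - C (∑ i, P i) : MvPolynomial (Fin n) ℂ)
      ∈ vanishingIdeal ℂ (permOrbit P) := by
  rw [mem_vanishingIdeal_iff]
  rintro x ⟨σ, rfl⟩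
  rw [map_sub, map_sum]
  simp only [aeval_X, aeval_C, Algebra.algebraMap_self, RingHom.id_apply, Function.comp_apply]
  rw [Equiv.sum_comp σ P, sub_self]

lemma esub_totalDegree_le (a : ℂ) :
    (((∑ i : Fin n, X i) - C a : MvPolynomial (Fin n) ℂ)).totalDegree ≤ 1 :=
  le_trans (totalDegree_sub _ _)
    (max_le (e_homog (n := n)).totalDegree_le (by simp [totalDegree_C]))

lemma part1 (P Q : Fin n → ℂ) :
    ∀ f ∈ topIdeal (permOrbit Q),
      (∑ i : Fin n, (X i : MvPolynomial (Fin n) ℂ)) * f ∈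
        topIdeal (permOrbit P ∪ permOrbit Q) := by
  intro f hf
  refine Submodule.span_induction
    (p := fun x _ => (∑ i : Fin n, (X i : MvPolynomial (Fin n) ℂ)) * x ∈
      topIdeal (permOrbit P ∪ permOrbit Q)) ?_ ?_ ?_ ?_ hf
  · rintro x ⟨g, hgQ, hg0, rfl⟩
    have hg'mem : ((∑ i : Fin n, X i) - C (∑ i, P i)) * g
        ∈ vanishingIdeal ℂ (permOrbit P ∪ permOrbit Q) := by
      rw [mem_vanishingIdeal_iff]
      rintro x (hx | hx)
      · rw [map_mul, mem_vanishingIdeal_iff.mp (esub_mem P) x hx, zero_mul]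
      · rw [map_mul, mem_vanishingIdeal_iff.mp hgQ x hx, mul_zero]
    have hcomp : homogeneousComponent (g.totalDegree + 1)
        (((∑ i : Fin n, X i) - C (∑ i, P i)) * g)
        = (∑ i : Fin n, X i) * topComponent g := by
      rw [sub_mul, map_sub, comp_mul_homog e_homog,
        if_pos (by omega : 1 ≤ g.totalDegree + 1), Nat.add_sub_cancel,
        homogeneousComponent_C_mul,
        homogeneousComponent_eq_zero _ _ (by omega : g.totalDegree < g.totalDegree + 1),
        mul_zero, sub_zero]
      rfl
    have hdeg' : (((∑ i : Fin n, X i) - C (∑ i, P i)) * g).totalDegree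
        ≤ g.totalDegree + 1 := by
      refine le_trans (totalDegree_mul _ _) ?_
      have := esub_totalDegree_le (n := n) (∑ i, P i)
      omega
    have := comp_mem_topIdeal hg'mem hdeg'
    rwa [hcomp] at this
  · show (∑ i : Fin n, (X i : MvPolynomial (Fin n) ℂ)) * 0 ∈
      topIdeal (permOrbit P ∪ permOrbit Q)
    rw [mul_zero]; exact zero_mem _
  · intro x y _ _ hx hy
    rw [mul_add]; exact add_mem hx hy
  · intro a x _ hx
    rw [smul_eq_mul, ← mul_assoc, mul_comm _ a, mul_assoc]
    exact Ideal.mul_mem_left _ a hx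

lemma part2 (P Q : Fin n → ℂ)
    (hPQ : topIdeal (permOrbit P) ≤ topIdeal (permOrbit Q))
    (hne : ∑ i, P i ≠ ∑ i, Q i) (f : MvPolynomial (Fin n) ℂ)
    (hf : (∑ i : Fin n, (X i : MvPolynomial (Fin n) ℂ)) * f ∈
      topIdeal (permOrbit P ∪ permOrbit Q)) :
    f ∈ topIdeal (permOrbit Q) := by
  have hbc : (∑ i, Q i) - (∑ i, P i) ≠ 0 := sub_ne_zero.mpr (Ne.symm hne)
  have key : ∀ d : ℕ, homogeneousComponent d f ∈ topIdeal (permOrbit Q) := by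
    intro d
    set h := homogeneousComponent d f with hh
    have hhom : h.IsHomogeneous d := homogeneousComponent_isHomogeneous d f
    have h1 : homogeneousComponent d h = h := by
      rw [homogeneousComponent_of_mem ((mem_homogeneousSubmodule _ _).2 hhom), if_pos rfl]
    have h2 : homogeneousComponent (d + 1) h = 0 := by
      rw [homogeneousComponent_of_mem ((mem_homogeneousSubmodule _ _).2 hhom),
        if_neg (by omega)]
    obtain ⟨g, hgY, hgdeg, hgcomp⟩ := topIdeal_struct hf (d + 1)
    have hcompef : homogeneousComponent (d + 1)
        ((∑ i : Fin n, X i : MvPolynomial (Fin n) ℂ) * f)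
        = (∑ i : Fin n, X i) * h := by
      rw [comp_mul_homog e_homog, if_pos (by omega : 1 ≤ d + 1), Nat.add_sub_cancel]
    rw [hcompef] at hgcomp
    have hgQ : g ∈ vanishingIdeal ℂ (permOrbit Q) :=
      vanishingIdeal_anti_mono Set.subset_union_right hgY
    have hgP : g ∈ vanishingIdeal ℂ (permOrbit P) :=
      vanishingIdeal_anti_mono Set.subset_union_left hgY
    have compsub : ∀ a : ℂ, homogeneousComponent (d + 1)
        (g - ((∑ i : Fin n, X i) - C a) * h) = 0 := by
      intro a
      rw [map_sub, hgcomp, sub_mul, map_sub, comp_mul_homog e_homog,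
        if_pos (by omega : 1 ≤ d + 1), Nat.add_sub_cancel, homogeneousComponent_C_mul,
        h1, h2, mul_zero, sub_zero, sub_self]
    have degsub : ∀ a : ℂ,
        (g - ((∑ i : Fin n, X i) - C a) * h).totalDegree ≤ d + 1 := by
      intro a
      refine le_trans (totalDegree_sub _ _) (max_le hgdeg ?_)
      refine le_trans (totalDegree_mul _ _) ?_
      have hA := esub_totalDegree_le (n := n) a
      have hB : h.totalDegree ≤ d := hhom.totalDegree_le
      omega
    have mem1 : homogeneousComponent d (g - ((∑ i : Fin n, X i) - C (∑ i, Q i)) * h)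
        ∈ topIdeal (permOrbit Q) :=
      comp_mem_topIdeal
        (Submodule.sub_mem _ hgQ (Ideal.mul_mem_right h _ (esub_mem Q)))
        (totalDegree_le_of_comp (degsub _) (compsub _))
    have mem2 : homogeneousComponent d (g - ((∑ i : Fin n, X i) - C (∑ i, P i)) * h)
        ∈ topIdeal (permOrbit Q) :=
      hPQ (comp_mem_topIdeal
        (Submodule.sub_mem _ hgP (Ideal.mul_mem_right h _ (esub_mem P)))
        (totalDegree_le_of_comp (degsub _) (compsub _)))
    have hdiff : homogeneousComponent d (g - ((∑ i : Fin n, X i) - C (∑ i, Q i)) * h)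
        - homogeneousComponent d (g - ((∑ i : Fin n, X i) - C (∑ i, P i)) * h)
        = C ((∑ i, Q i) - (∑ i, P i)) * h := by
      rw [← map_sub]
      have e1 : (g - ((∑ i : Fin n, X i) - C (∑ i, Q i)) * h)
          - (g - ((∑ i : Fin n, X i) - C (∑ i, P i)) * h)
          = C ((∑ i, Q i) - (∑ i, P i)) * h := by
        rw [C_sub]; ring
      rw [e1, homogeneousComponent_C_mul, h1]
    have hmem3 : C ((∑ i, Q i) - (∑ i, P i)) * h ∈ topIdeal (permOrbit Q) := by
      rw [← hdiff]; exact Submodule.sub_mem _ mem1 mem2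
    have hrw : h = C (((∑ i, Q i) - (∑ i, P i))⁻¹)
        * (C ((∑ i, Q i) - (∑ i, P i)) * h) := by
      rw [← mul_assoc, ← C_mul, inv_mul_cancel₀ hbc, C_1, one_mul]
    rw [hrw]
    exact Ideal.mul_mem_left _ _ hmem3
  rw [← sum_homogeneousComponent f]
  exact Submodule.sum_mem _ fun d _ => key d

end StmtAux

/-- multiplication by `x₁+⋯+xₙ` carries `T(S_n⟨Q⟩)` into `T(S_n⟨P,Q⟩)` (so it
induces a well-defined map of the quotients), and under the hypotheses
`T(S_n⟨P⟩) ⊆ T(S_n⟨Q⟩)` and `Σ(P) ≠ Σ(Q)` the induced map is injective. -/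
theorem mult_map_well_defined_and_injective {n : ℕ} (P Q : Fin n → ℂ) :
    (∀ f ∈ topIdeal (permOrbit Q),
        (∑ i : Fin n, (X i : MvPolynomial (Fin n) ℂ)) * f ∈
          topIdeal (permOrbit P ∪ permOrbit Q)) ∧
      (topIdeal (permOrbit P) ≤ topIdeal (permOrbit Q) → ∑ i, P i ≠ ∑ i, Q i →
        ∀ f : MvPolynomial (Fin n) ℂ,
          (∑ i : Fin n, (X i : MvPolynomial (Fin n) ℂ)) * f ∈
              topIdeal (permOrbit P ∪ permOrbit Q) →
            f ∈ topIdeal (permOrbit Q)) :=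
  ⟨StmtAux.part1 P Q, StmtAux.part2 P Q⟩

end
end

section
/- Let $P, Q \in \mathbb{C}^n$, suppose $T(S_n\langle P\rangle) \subseteq T(S_n\langle Q\rangle)$ and $\Sigma(P) \neq \Sigma(Q)$, and let $Y = S_n\langle P, Q\rangle$. Then the sequence of $\mathbb{C}[x_1,\dots,x_n]$-modules $0 \to \mathbb{C}[x_1,\dots,x_n]/T(S_n\langle Q\rangle) \to \mathbb{C}[x_1,\dots,x_n]/T(Y) \to \mathbb{C}[x_1,\dots,x_n]/T(S_n\langle P\rangle) \to 0$ is exact, where the first map is induced by multiplication by $x_1+\dots+x_n$ and the second map is the quotient map induced by the containment $T(Y) + (x_1+\dots+x_n) \supseteq T(Y)$ together with $T(S_n\langle P\rangle) \supseteq T(Y)$. -/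
open MvPolynomial

noncomputable section

attribute [local instance] MvPolynomial.gradedAlgebra

namespace ExactAux

variable {n : ℕ}

lemma decompose_eq (f : MvPolynomial (Fin n) ℂ) (i : ℕ) :
    (DirectSum.decompose (homogeneousSubmodule (Fin n) ℂ) f i : MvPolynomial (Fin n) ℂ) =
      homogeneousComponent i f := decomposition.decompose'_apply f i

lemma hc_mul_le {q : MvPolynomial (Fin n) ℂ} {i : ℕ} (hq : q ∈ homogeneousSubmodule (Fin n) ℂ i)
    (g : MvPolynomial (Fin n) ℂ) {d : ℕ} (h : i ≤ d) :
    homogeneousComponent d (q * g) = q * homogeneousComponent (d - i) g := by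
  have := DirectSum.coe_decompose_mul_of_left_mem_of_le (𝒜 := homogeneousSubmodule (Fin n) ℂ)
    (b := g) (n := d) hq h
  rwa [decompose_eq, decompose_eq] at this

lemma hc_mul_not_le {q : MvPolynomial (Fin n) ℂ} {i : ℕ}
    (hq : q ∈ homogeneousSubmodule (Fin n) ℂ i)
    (g : MvPolynomial (Fin n) ℂ) {d : ℕ} (h : ¬ i ≤ d) :
    homogeneousComponent d (q * g) = 0 := by
  have := DirectSum.coe_decompose_mul_of_left_mem_of_not_le (𝒜 := homogeneousSubmodule (Fin n) ℂ)
    (b := g) (n := d) hq h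
  rwa [decompose_eq] at this

lemma hc_hc (f : MvPolynomial (Fin n) ℂ) (d e : ℕ) :
    homogeneousComponent e (homogeneousComponent d f) =
      if e = d then homogeneousComponent d f else 0 :=
  homogeneousComponent_of_mem (homogeneousComponent_mem d f)

lemma hc_self (f : MvPolynomial (Fin n) ℂ) (d : ℕ) :
    homogeneousComponent d (homogeneousComponent d f) = homogeneousComponent d f := by
  rw [hc_hc]; simp

lemma hc_ne (f : MvPolynomial (Fin n) ℂ) {d e : ℕ} (h : e ≠ d) :
    homogeneousComponent e (homogeneousComponent d f) = 0 := by
  rw [hc_hc, if_neg h]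

lemma hc_degree_ne_zero {f : MvPolynomial (Fin n) ℂ} (hf : f ≠ 0) :
    homogeneousComponent f.totalDegree f ≠ 0 := by
  obtain ⟨m, hm, hms⟩ := Finset.exists_mem_eq_sup f.support (support_nonempty.2 hf)
    (fun s => s.sum fun _ e => e)
  intro h
  have h2 := coeff_homogeneousComponent (n := f.totalDegree) (φ := f) m
  rw [h, coeff_zero, if_pos (show m.degree = f.totalDegree from by
    rw [totalDegree, hms]; rfl)] at h2
  exact (mem_support_iff.1 hm) h2.symm

lemma totalDegree_le_of_hc {f : MvPolynomial (Fin n) ℂ} {d : ℕ} (h1 : f.totalDegree ≤ d + 1)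
    (h2 : homogeneousComponent (d + 1) f = 0) : f.totalDegree ≤ d := by
  by_contra hlt
  push_neg at hlt
  have hdeg : f.totalDegree = d + 1 := le_antisymm h1 hlt
  have hf0 : f ≠ 0 := by intro h; rw [h, totalDegree_zero] at hdeg; omega
  exact hc_degree_ne_zero hf0 (by rw [hdeg]; exact h2)

lemma comp_mem_top {Z : Set (Fin n → ℂ)} {K : MvPolynomial (Fin n) ℂ} (hK : K ∈ vanishingIdeal ℂ Z)
    {d : ℕ} (hdeg : K.totalDegree ≤ d) : homogeneousComponent d K ∈ topIdeal Z := by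
  by_cases h0 : homogeneousComponent d K = 0
  · rw [h0]; exact zero_mem _
  · have hKne : K ≠ 0 := fun h => h0 (by rw [h, map_zero])
    have hd : K.totalDegree = d := le_antisymm hdeg (by
      by_contra hlt; push_neg at hlt; exact h0 (homogeneousComponent_eq_zero _ _ hlt))
    exact Ideal.subset_span ⟨K, hK, hKne, by rw [topComponent, hd]⟩

lemma lift_exists (Z : Set (Fin n → ℂ)) {f : MvPolynomial (Fin n) ℂ} (hf : f ∈ topIdeal Z)
    (d : ℕ) : ∃ K, K ∈ vanishingIdeal ℂ Z ∧ K.totalDegree ≤ d ∧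
      homogeneousComponent d K = homogeneousComponent d f := by
  refine Submodule.span_induction (p := fun f _ => ∀ d, ∃ K, K ∈ vanishingIdeal ℂ Z ∧
      K.totalDegree ≤ d ∧ homogeneousComponent d K = homogeneousComponent d f)
    ?_ ?_ ?_ ?_ hf d
  · rintro g ⟨k, hk, hk0, rfl⟩ d
    by_cases hd : d = k.totalDegree
    · subst hd
      exact ⟨k, hk, le_rfl, by rw [topComponent, hc_self]⟩
    · exact ⟨0, zero_mem _, by simp, by rw [map_zero, topComponent, hc_hc, if_neg hd]⟩
  · intro d; exact ⟨0, zero_mem _, by simp, by simp⟩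
  · rintro x y hx hy ihx ihy d
    obtain ⟨K1, h1m, h1d, h1c⟩ := ihx d
    obtain ⟨K2, h2m, h2d, h2c⟩ := ihy d
    exact ⟨K1 + K2, add_mem h1m h2m,
      (totalDegree_add _ _).trans (max_le h1d h2d), by rw [map_add, map_add, h1c, h2c]⟩
  · rintro a x hx ih d
    choose K hKmem hKdeg hKc using ih
    refine ⟨∑ i ∈ Finset.range (d + 1), homogeneousComponent i a * K (d - i),
      Ideal.sum_mem _ fun i _ => Ideal.mul_mem_left _ _ (hKmem (d - i)), ?_, ?_⟩
    · refine (totalDegree_finset_sum _ _).trans (Finset.sup_le fun i hi => ?_)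
      rw [Finset.mem_range] at hi
      refine (totalDegree_mul _ _).trans ?_
      have h1 : (homogeneousComponent i a).totalDegree ≤ i :=
        (homogeneousComponent_isHomogeneous i a).totalDegree_le
      have h2 := hKdeg (d - i)
      omega
    · have lhs : homogeneousComponent d (∑ i ∈ Finset.range (d + 1),
          homogeneousComponent i a * K (d - i)) =
          ∑ i ∈ Finset.range (d + 1),
            homogeneousComponent i a * homogeneousComponent (d - i) x := by
        rw [map_sum]
        refine Finset.sum_congr rfl fun i hi => ?_
        rw [Finset.mem_range] at hi
        rw [hc_mul_le (homogeneousComponent_mem i a) _ (show i ≤ d by omega), hKc]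
      have ha : (∑ i ∈ Finset.range (max a.totalDegree d + 1), homogeneousComponent i a)
          = a := by
        have hz : ∀ i ∈ Finset.range (max a.totalDegree d + 1),
            i ∉ Finset.range (a.totalDegree + 1) → homogeneousComponent i a = 0 := by
          intro i _ hi
          rw [Finset.mem_range, not_lt] at hi
          exact homogeneousComponent_eq_zero i a (by omega)
        conv_rhs => rw [← sum_homogeneousComponent a]
        exact (Finset.sum_subset (Finset.range_subset_range.2
          (show a.totalDegree + 1 ≤ max a.totalDegree d + 1 by omega)) hz).symm
      have rhs : homogeneousComponent d (a • x) =
          ∑ i ∈ Finset.range (d + 1),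
            homogeneousComponent i a * homogeneousComponent (d - i) x := by
        conv_lhs => rw [smul_eq_mul, ← ha]
        rw [Finset.sum_mul, map_sum,
          ← Finset.sum_subset (Finset.range_subset_range.2
            (show d + 1 ≤ max a.totalDegree d + 1 by omega))
          (fun i _ hni => by
            rw [Finset.mem_range, not_lt] at hni
            exact hc_mul_not_le (homogeneousComponent_mem i a) x (show ¬ i ≤ d by omega))]
        refine Finset.sum_congr rfl fun i hi => ?_
        rw [Finset.mem_range] at hi
        rw [hc_mul_le (homogeneousComponent_mem i a) x (show i ≤ d by omega)]
      rw [lhs, rhs]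

lemma eval_s_orbit {P : Fin n → ℂ} {x : Fin n → ℂ} (hx : x ∈ permOrbit P) :
    eval x (∑ i : Fin n, (X i : MvPolynomial (Fin n) ℂ)) = ∑ i, P i := by
  obtain ⟨σ, rfl⟩ := hx
  rw [map_sum]
  simp only [eval_X, Function.comp_apply]
  exact Equiv.sum_comp σ P

lemma top_anti {A B : Set (Fin n → ℂ)} (h : A ⊆ B) : topIdeal B ≤ topIdeal A :=
  Ideal.span_mono fun _ ⟨f, hf, h0, ht⟩ => ⟨f, vanishingIdeal_anti_mono h hf, h0, ht⟩

lemma mul_vanish {A B : Fin n → ℂ} {h : MvPolynomial (Fin n) ℂ}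
    (hh : h ∈ vanishingIdeal ℂ (permOrbit A)) :
    ((∑ i : Fin n, X i) - C (∑ i, B i)) * h ∈ vanishingIdeal ℂ (permOrbit A ∪ permOrbit B) := by
  rw [mem_vanishingIdeal_iff]
  rintro x (hx | hx)
  · rw [aeval_eq_eval, map_mul, show eval x h = 0 from mem_vanishingIdeal_iff.1 hh x hx, mul_zero]
  · rw [aeval_eq_eval, map_mul, map_sub, eval_C, eval_s_orbit hx, sub_self, zero_mul]

lemma sub_vanish {A : Fin n → ℂ} {K φ : MvPolynomial (Fin n) ℂ}
    (hK : ∀ x ∈ permOrbit A, eval x K = 0) :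
    K - ((∑ i : Fin n, X i) - C (∑ i, A i)) * φ ∈ vanishingIdeal ℂ (permOrbit A) := by
  rw [mem_vanishingIdeal_iff]
  intro x hx
  rw [aeval_eq_eval, map_sub, map_mul, map_sub, eval_C, eval_s_orbit hx, sub_self, zero_mul, sub_zero, hK x hx]

lemma s_homog : (∑ i : Fin n, (X i : MvPolynomial (Fin n) ℂ)) ∈
    homogeneousSubmodule (Fin n) ℂ 1 :=
  Submodule.sum_mem _ fun i _ => (mem_homogeneousSubmodule _ _).2 (isHomogeneous_X ℂ i)

lemma s_ne_zero (hn : n ≠ 0) : (∑ i : Fin n, (X i : MvPolynomial (Fin n) ℂ)) ≠ 0 := by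
  intro h
  have h2 := congrArg (eval (fun _ => (1 : ℂ))) h
  rw [map_sum, map_zero] at h2
  simp only [eval_X] at h2
  rw [Finset.sum_const, Finset.card_univ, Fintype.card_fin, nsmul_eq_mul, mul_one] at h2
  exact hn (Nat.cast_eq_zero.1 h2)

lemma s_deg_le : (∑ i : Fin n, (X i : MvPolynomial (Fin n) ℂ)).totalDegree ≤ 1 :=
  ((mem_homogeneousSubmodule _ _).1 s_homog).totalDegree_le

lemma sC_deg_le (a : ℂ) :
    ((∑ i : Fin n, (X i : MvPolynomial (Fin n) ℂ)) - C a).totalDegree ≤ 1 :=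
  (totalDegree_sub _ _).trans (max_le s_deg_le (by rw [totalDegree_C]; exact Nat.zero_le 1))

lemma s_mem_top (hn : n ≠ 0) (P : Fin n → ℂ) :
    (∑ i : Fin n, (X i : MvPolynomial (Fin n) ℂ)) ∈ topIdeal (permOrbit P) := by
  have hck : homogeneousComponent 1 ((∑ i : Fin n, (X i : MvPolynomial (Fin n) ℂ))
        - C (∑ i, P i)) = ∑ i : Fin n, (X i : MvPolynomial (Fin n) ℂ) := by
    rw [map_sub, homogeneousComponent_of_mem s_homog, if_pos rfl,
      homogeneousComponent_of_mem ((mem_homogeneousSubmodule _ _).2 (isHomogeneous_C _ _)),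
      if_neg one_ne_zero, sub_zero]
  have hk0 : (∑ i : Fin n, (X i : MvPolynomial (Fin n) ℂ)) - C (∑ i, P i) ≠ 0 :=
    fun h => s_ne_zero hn (by rw [← hck, h, map_zero])
  have hdeg : ((∑ i : Fin n, (X i : MvPolynomial (Fin n) ℂ)) - C (∑ i, P i)).totalDegree = 1 := by
    refine le_antisymm (sC_deg_le _) ?_
    by_contra hlt
    push_neg at hlt
    exact s_ne_zero hn (by rw [← hck, homogeneousComponent_eq_zero 1 _ (by omega)])
  have hkmem : (∑ i : Fin n, (X i : MvPolynomial (Fin n) ℂ)) - C (∑ i, P i)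
      ∈ vanishingIdeal ℂ (permOrbit P) := by
    rw [mem_vanishingIdeal_iff]
    intro x hx
    rw [aeval_eq_eval, map_sub, eval_C, eval_s_orbit hx, sub_self]
  exact Ideal.subset_span ⟨_, hkmem, hk0, by rw [topComponent, hdeg]; exact hck⟩

lemma M_lemma {f K : MvPolynomial (Fin n) ℂ} {d : ℕ} (a : ℂ)
    (hKdeg : K.totalDegree ≤ d + 1)
    (hKc : homogeneousComponent (d + 1) K =
      (∑ i : Fin n, X i) * homogeneousComponent d f) :
    (K - ((∑ i : Fin n, X i) - C a) * homogeneousComponent d f).totalDegree ≤ d := by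
  have h1 : homogeneousComponent (d + 1)
      (K - ((∑ i : Fin n, X i) - C a) * homogeneousComponent d f) = 0 := by
    rw [map_sub, hKc, sub_mul, map_sub, hc_mul_le s_homog _ (by omega), Nat.add_sub_cancel,
      hc_self, homogeneousComponent_C_mul, hc_ne f (by omega), mul_zero, sub_zero, sub_self]
  refine totalDegree_le_of_hc ?_ h1
  refine (totalDegree_sub _ _).trans (max_le hKdeg ((totalDegree_mul _ _).trans ?_))
  have h2 := sC_deg_le (n := n) a
  have h3 := (homogeneousComponent_isHomogeneous d f).totalDegree_le
  omega

lemma exists_w (h' : MvPolynomial (Fin n) ℂ) (d : ℕ) :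
    ∃ w, homogeneousComponent d ((∑ i : Fin n, X i) * h') = (∑ i : Fin n, X i) * w := by
  rcases d with _ | e
  · exact ⟨0, by rw [hc_mul_not_le s_homog h' (by omega), mul_zero]⟩
  · exact ⟨homogeneousComponent e h', by rw [hc_mul_le s_homog h' (by omega),
      Nat.add_sub_cancel]⟩

end ExactAux

open ExactAux

/-- the sequence
`0 → ℂ[x]/T(S_n⟨Q⟩) → ℂ[x]/T(S_n⟨P,Q⟩) → ℂ[x]/T(S_n⟨P⟩) → 0`
is exact, where the first map is induced by multiplication by `s = x₁+⋯+xₙ` and the second map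
is the quotient map.  Exactness is expressed elementwise: the first map is injective
(`s·f ∈ T(Y) → f ∈ T(S_n⟨Q⟩)`), the kernel of the second map equals the image of the first
(`f ∈ T(S_n⟨P⟩) ↔ ∃ g, f - s·g ∈ T(Y)`), and the second map is surjective. -/
theorem exact_sequence {n : ℕ} (P Q : Fin n → ℂ)
    (hPQ : topIdeal (permOrbit P) ≤ topIdeal (permOrbit Q))
    (hsum : ∑ i, P i ≠ ∑ i, Q i) :
    (∀ f : MvPolynomial (Fin n) ℂ,
        (∑ i : Fin n, (X i : MvPolynomial (Fin n) ℂ)) * f ∈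
            topIdeal (permOrbit P ∪ permOrbit Q) →
          f ∈ topIdeal (permOrbit Q)) ∧
      (∀ f : MvPolynomial (Fin n) ℂ,
        f ∈ topIdeal (permOrbit P) ↔
          ∃ g : MvPolynomial (Fin n) ℂ,
            f - (∑ i : Fin n, (X i : MvPolynomial (Fin n) ℂ)) * g ∈
              topIdeal (permOrbit P ∪ permOrbit Q)) ∧
      (∀ a : MvPolynomial (Fin n) ℂ ⧸ topIdeal (permOrbit P),
        ∃ f : MvPolynomial (Fin n) ℂ, Ideal.Quotient.mk (topIdeal (permOrbit P)) f = a) := by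
  have hn : n ≠ 0 := by rintro rfl; simp at hsum
  have hc : (∑ i, P i) - (∑ i, Q i) ≠ 0 := sub_ne_zero.2 hsum
  refine ⟨?_, ?_, fun a => Ideal.Quotient.mk_surjective a⟩
  · -- injectivity of multiplication by s
    intro f hsf
    have key : ∀ d, homogeneousComponent d f ∈ topIdeal (permOrbit Q) := by
      intro d
      obtain ⟨K, hKmem, hKdeg, hKc⟩ := lift_exists _ hsf (d + 1)
      have hKc' : homogeneousComponent (d + 1) K =
          (∑ i : Fin n, X i) * homogeneousComponent d f := by
        rw [hKc, hc_mul_le s_homog f (by omega), Nat.add_sub_cancel]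
      have hMv : K - ((∑ i : Fin n, X i) - C (∑ i, P i)) * homogeneousComponent d f
          ∈ vanishingIdeal ℂ (permOrbit P) :=
        sub_vanish fun x hx => mem_vanishingIdeal_iff.1 hKmem x (Set.mem_union_left _ hx)
      have hNv : K - ((∑ i : Fin n, X i) - C (∑ i, Q i)) * homogeneousComponent d f
          ∈ vanishingIdeal ℂ (permOrbit Q) :=
        sub_vanish fun x hx => mem_vanishingIdeal_iff.1 hKmem x (Set.mem_union_right _ hx)
      have hMT : homogeneousComponent d
          (K - ((∑ i : Fin n, X i) - C (∑ i, P i)) * homogeneousComponent d f)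
          ∈ topIdeal (permOrbit Q) := hPQ (comp_mem_top hMv (M_lemma _ hKdeg hKc'))
      have hNT : homogeneousComponent d
          (K - ((∑ i : Fin n, X i) - C (∑ i, Q i)) * homogeneousComponent d f)
          ∈ topIdeal (permOrbit Q) := comp_mem_top hNv (M_lemma _ hKdeg hKc')
      have hMN : homogeneousComponent d
            (K - ((∑ i : Fin n, X i) - C (∑ i, P i)) * homogeneousComponent d f)
          - homogeneousComponent d
            (K - ((∑ i : Fin n, X i) - C (∑ i, Q i)) * homogeneousComponent d f)
          = C ((∑ i, P i) - (∑ i, Q i)) * homogeneousComponent d f := by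
        rw [← map_sub]
        have hsub : (K - ((∑ i : Fin n, X i) - C (∑ i, P i)) * homogeneousComponent d f)
            - (K - ((∑ i : Fin n, X i) - C (∑ i, Q i)) * homogeneousComponent d f)
            = C ((∑ i, P i) - (∑ i, Q i)) * homogeneousComponent d f := by
          rw [map_sub C]; ring
        rw [hsub, homogeneousComponent_C_mul, hc_self]
      have hres : homogeneousComponent d f = C (((∑ i, P i) - (∑ i, Q i))⁻¹) *
          (homogeneousComponent d
            (K - ((∑ i : Fin n, X i) - C (∑ i, P i)) * homogeneousComponent d f)
          - homogeneousComponent d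
            (K - ((∑ i : Fin n, X i) - C (∑ i, Q i)) * homogeneousComponent d f)) := by
        rw [hMN, ← mul_assoc, ← map_mul, inv_mul_cancel₀ hc, map_one, one_mul]
      rw [hres]
      exact Ideal.mul_mem_left _ _ (sub_mem hMT hNT)
    have h4 : (∑ i ∈ Finset.range (f.totalDegree + 1), homogeneousComponent i f)
        ∈ topIdeal (permOrbit Q) := Ideal.sum_mem _ fun i _ => key i
    rwa [sum_homogeneousComponent] at h4
  · -- middle exactness
    intro f
    constructor
    · intro hfP
      have hfQ : f ∈ topIdeal (permOrbit Q) := hPQ hfP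
      have claim2 : ∀ d, ∃ g, homogeneousComponent d f - (∑ i : Fin n, X i) * g
          ∈ topIdeal (permOrbit P ∪ permOrbit Q) := by
        intro d
        obtain ⟨h, hhm, hhd, hhc⟩ := lift_exists _ hfP d
        obtain ⟨k, hkm, hkd, hkc⟩ := lift_exists _ hfQ d
        obtain ⟨w1, hw1⟩ := exists_w h d
        obtain ⟨w2, hw2⟩ := exists_w k d
        have hAv : ((∑ i : Fin n, X i) - C (∑ i, Q i)) * h
            - ((∑ i : Fin n, X i) - C (∑ i, P i)) * k
            ∈ vanishingIdeal ℂ (permOrbit P ∪ permOrbit Q) := by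
          refine sub_mem (mul_vanish hhm) ?_
          have := mul_vanish (B := P) hkm
          rwa [Set.union_comm] at this
        have hAd1 : (((∑ i : Fin n, X i) - C (∑ i, Q i)) * h
            - ((∑ i : Fin n, X i) - C (∑ i, P i)) * k).totalDegree ≤ d + 1 := by
          refine (totalDegree_sub _ _).trans (max_le ?_ ?_) <;>
            refine (totalDegree_mul _ _).trans ?_
          · have := sC_deg_le (n := n) (∑ i, Q i); omega
          · have := sC_deg_le (n := n) (∑ i, P i); omega
        have hAc1 : homogeneousComponent (d + 1)
            (((∑ i : Fin n, X i) - C (∑ i, Q i)) * h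
              - ((∑ i : Fin n, X i) - C (∑ i, P i)) * k) = 0 := by
          rw [map_sub, sub_mul, sub_mul, map_sub, map_sub,
            hc_mul_le s_homog h (by omega), hc_mul_le s_homog k (by omega),
            Nat.add_sub_cancel, homogeneousComponent_C_mul, homogeneousComponent_C_mul,
            homogeneousComponent_eq_zero (d + 1) h (by omega),
            homogeneousComponent_eq_zero (d + 1) k (by omega),
            hhc, hkc]
          ring
        have hAd : (((∑ i : Fin n, X i) - C (∑ i, Q i)) * h
            - ((∑ i : Fin n, X i) - C (∑ i, P i)) * k).totalDegree ≤ d :=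
          totalDegree_le_of_hc hAd1 hAc1
        have hAT : homogeneousComponent d
            (((∑ i : Fin n, X i) - C (∑ i, Q i)) * h
              - ((∑ i : Fin n, X i) - C (∑ i, P i)) * k)
            ∈ topIdeal (permOrbit P ∪ permOrbit Q) := comp_mem_top hAv hAd
        have hAc : homogeneousComponent d
            (((∑ i : Fin n, X i) - C (∑ i, Q i)) * h
              - ((∑ i : Fin n, X i) - C (∑ i, P i)) * k)
            = (∑ i : Fin n, X i) * (w1 - w2)
              + C ((∑ i, P i) - (∑ i, Q i)) * homogeneousComponent d f := by
          rw [map_sub, sub_mul, sub_mul, map_sub, map_sub, hw1, hw2,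
            homogeneousComponent_C_mul, homogeneousComponent_C_mul, hhc, hkc, map_sub C]
          ring
        refine ⟨-(C (((∑ i, P i) - (∑ i, Q i))⁻¹) * (w1 - w2)), ?_⟩
        have hCC : (C (((∑ i, P i) - (∑ i, Q i))⁻¹) : MvPolynomial (Fin n) ℂ)
            * C ((∑ i, P i) - (∑ i, Q i)) = 1 := by
          rw [← map_mul, inv_mul_cancel₀ hc, map_one]
        have hres : homogeneousComponent d f
            - (∑ i : Fin n, X i) * (-(C (((∑ i, P i) - (∑ i, Q i))⁻¹) * (w1 - w2)))
            = C (((∑ i, P i) - (∑ i, Q i))⁻¹) * homogeneousComponent d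
              (((∑ i : Fin n, X i) - C (∑ i, Q i)) * h
                - ((∑ i : Fin n, X i) - C (∑ i, P i)) * k) := by
          rw [hAc]
          linear_combination (-(homogeneousComponent d f)) * hCC
        rw [hres]
        exact Ideal.mul_mem_left _ _ hAT
      have claim3 : ∀ F : Finset ℕ, ∃ g, (∑ i ∈ F, homogeneousComponent i f) -
          (∑ i : Fin n, X i) * g ∈ topIdeal (permOrbit P ∪ permOrbit Q) := by
        intro F
        induction F using Finset.induction_on with
        | empty => exact ⟨0, by rw [mul_zero, Finset.sum_empty, sub_zero]; exact zero_mem _⟩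
        | @insert a F ha ih =>
          obtain ⟨g1, h1⟩ := ih
          obtain ⟨g2, h2⟩ := claim2 a
          refine ⟨g2 + g1, ?_⟩
          rw [Finset.sum_insert ha]
          have := add_mem h2 h1
          convert this using 1
          ring
      obtain ⟨g, hg⟩ := claim3 (Finset.range (f.totalDegree + 1))
      rw [sum_homogeneousComponent] at hg
      exact ⟨g, hg⟩
    · rintro ⟨g, hg⟩
      have h1 : f - (∑ i : Fin n, X i) * g ∈ topIdeal (permOrbit P) :=
        top_anti Set.subset_union_left hg
      have h2 := Ideal.mul_mem_right g _ (s_mem_top hn P)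
      have h3 := add_mem h1 h2
      rwa [sub_add_cancel] at h3
end
end
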